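/- arXiv:2109.14192 — 5 statements merged into one kernel-verified Lean document; each statement's English description precedes it below -/
import Mathlib

section
/- Let (Y,μ) and (Z,ν) be σ-finite measure spaces, K : Y × Z → [0,∞] a measurable kernel, and A > 0, B ≥ 0 constants such that ∫_Z K(y,z) dν(z) ≤ A for μ-almost every y and ∫_Y K(y,z) dμ(y) ≤ B for ν-almost every z. Let φ be a Young function and u : Z → [0,∞) a measurable function such that y ↦ ∫_Z K(y,z) u(z) dν(z) is finite for μ-almost every y. Then ∫_Y φ( (1/A)·∫_Z K(y,z) u(z) dν(z) ) dμ(y) ≤ (B/A)·∫_Z φ(u(z)) dν(z). -/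
open MeasureTheory ENNReal

/-- A Young function: a convex, even, nonnegative function `φ : ℝ → [0,∞)`
with `φ t = 0` iff `t = 0`. -/
def IsYoungFunction (φ : ℝ → ℝ) : Prop :=
  ConvexOn ℝ Set.univ φ ∧ (∀ t, φ (-t) = φ t) ∧ (∀ t, 0 ≤ φ t) ∧ (∀ t, φ t = 0 ↔ t = 0)

lemma young_smul_le {φ : ℝ → ℝ} (hφ : IsYoungFunction φ) {l t : ℝ} (hl0 : 0 ≤ l)
    (hl1 : l ≤ 1) : φ (l * t) ≤ l * φ t := by
  have hφ0 : φ 0 = 0 := (hφ.2.2.2 0).mpr rfl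
  have h := hφ.1.2 (Set.mem_univ t) (Set.mem_univ (0 : ℝ)) hl0 (by linarith : (0:ℝ) ≤ 1 - l)
    (by ring)
  simpa [hφ0] using h

lemma young_continuous {φ : ℝ → ℝ} (hφ : IsYoungFunction φ) : Continuous φ :=
  continuousOn_univ.mp (hφ.1.continuousOn isOpen_univ)

lemma young_aux {Z : Type*} [MeasurableSpace Z] (m : Measure Z) {A : ℝ} (hA : 0 < A)
    (hm : m Set.univ ≤ ENNReal.ofReal A)
    {φ : ℝ → ℝ} (hφ : IsYoungFunction φ)
    {u : Z → ℝ} (hu : Measurable u) (hu0 : ∀ z, 0 ≤ u z)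
    (hfin : ∫⁻ z, ENNReal.ofReal (u z) ∂m < ⊤) :
    ENNReal.ofReal (φ ((1 / A) * (∫⁻ z, ENNReal.ofReal (u z) ∂m).toReal)) ≤
      (ENNReal.ofReal A)⁻¹ * ∫⁻ z, ENNReal.ofReal (φ (u z)) ∂m := by
  have hφ0 : φ 0 = 0 := (hφ.2.2.2 0).mpr rfl
  have hAinv0 : (ENNReal.ofReal A)⁻¹ ≠ 0 := by
    simp [ENNReal.inv_ne_zero]
  by_cases htop : ∫⁻ z, ENNReal.ofReal (φ (u z)) ∂m = ⊤
  · rw [htop, ENNReal.mul_top hAinv0]; exact le_top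
  have hfm : IsFiniteMeasure m := ⟨lt_of_le_of_lt hm ofReal_lt_top⟩
  by_cases hm0 : m = 0
  · simp [hm0, hφ0]
  have hnz : NeZero m := ⟨hm0⟩
  set c := (m Set.univ).toReal with hc
  have hc0 : 0 < c := by
    apply toReal_pos
    · simpa [Measure.measure_univ_eq_zero] using hm0
    · exact (lt_of_le_of_lt hm ofReal_lt_top).ne
  have hcA : c ≤ A := by
    have := (toReal_le_toReal (lt_of_le_of_lt hm ofReal_lt_top).ne ofReal_ne_top).mpr hm
    rwa [toReal_ofReal hA.le] at this
  have hui : Integrable u m :=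
    (lintegral_ofReal_ne_top_iff_integrable hu.aestronglyMeasurable
      (Filter.Eventually.of_forall hu0)).mp hfin.ne
  have hφui : Integrable (fun z => φ (u z)) m :=
    (lintegral_ofReal_ne_top_iff_integrable
      ((young_continuous hφ).measurable.comp hu).aestronglyMeasurable
      (Filter.Eventually.of_forall fun z => hφ.2.2.1 (u z))).mp htop
  have hJ : φ (⨍ z, u z ∂m) ≤ ⨍ z, φ (u z) ∂m :=
    hφ.1.map_average_le ((young_continuous hφ).continuousOn) isClosed_univ
      (Filter.Eventually.of_forall fun _ => trivial) hui hφui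
  set I := ∫ z, u z ∂m with hI
  set J := ∫ z, φ (u z) ∂m with hJdef
  have hIlin : (∫⁻ z, ENNReal.ofReal (u z) ∂m).toReal = I := by
    rw [hI, integral_eq_lintegral_of_nonneg_ae (Filter.Eventually.of_forall hu0)
      hu.aestronglyMeasurable]
  have hJlin : (∫⁻ z, ENNReal.ofReal (φ (u z)) ∂m).toReal = J := by
    rw [hJdef, integral_eq_lintegral_of_nonneg_ae
      (Filter.Eventually.of_forall fun z => hφ.2.2.1 (u z))
      ((young_continuous hφ).measurable.comp hu).aestronglyMeasurable]
  have havgu : ⨍ z, u z ∂m = c⁻¹ * I := by rw [average_eq]; simp [hc, smul_eq_mul]; rfl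
  have havgφ : ⨍ z, φ (u z) ∂m = c⁻¹ * J := by rw [average_eq]; simp [hc, smul_eq_mul]; rfl
  have hkey : φ ((1 / A) * I) ≤ (1 / A) * J := by
    have h1 : (1 / A) * I = (c / A) * (c⁻¹ * I) := by field_simp
    have h2 : φ ((c / A) * (c⁻¹ * I)) ≤ (c / A) * φ (c⁻¹ * I) :=
      young_smul_le hφ (by positivity) (by rw [div_le_one hA]; exact hcA)
    have h3 : φ (c⁻¹ * I) ≤ c⁻¹ * J := by rw [← havgu, ← havgφ]; exact hJ
    calc φ ((1 / A) * I) = φ ((c / A) * (c⁻¹ * I)) := by rw [h1]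
      _ ≤ (c / A) * φ (c⁻¹ * I) := h2
      _ ≤ (c / A) * (c⁻¹ * J) := by
          apply mul_le_mul_of_nonneg_left h3 (by positivity)
      _ = (1 / A) * J := by field_simp
  calc ENNReal.ofReal (φ ((1 / A) * (∫⁻ z, ENNReal.ofReal (u z) ∂m).toReal))
      = ENNReal.ofReal (φ ((1 / A) * I)) := by rw [hIlin]
    _ ≤ ENNReal.ofReal ((1 / A) * J) := ENNReal.ofReal_le_ofReal hkey
    _ = ENNReal.ofReal (1 / A) * ENNReal.ofReal J := ENNReal.ofReal_mul (by positivity)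
    _ = (ENNReal.ofReal A)⁻¹ * ∫⁻ z, ENNReal.ofReal (φ (u z)) ∂m := by
        rw [← hJlin, ENNReal.ofReal_toReal htop, one_div, ENNReal.ofReal_inv_of_pos hA]

/-- Jensen-type estimate for an integral operator with a kernel having uniformly
bounded marginals (a modular Schur-test). -/
theorem lintegral_young_comp_kernel_le
    {Y Z : Type*} [MeasurableSpace Y] [MeasurableSpace Z]
    (μ : Measure Y) (ν : Measure Z) [SigmaFinite μ] [SigmaFinite ν]
    (K : Y × Z → ℝ≥0∞) (hK : Measurable K)
    (A B : ℝ) (hA : 0 < A) (hB : 0 ≤ B)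
    (hKA : ∀ᵐ y ∂μ, ∫⁻ z, K (y, z) ∂ν ≤ ENNReal.ofReal A)
    (hKB : ∀ᵐ z ∂ν, ∫⁻ y, K (y, z) ∂μ ≤ ENNReal.ofReal B)
    (φ : ℝ → ℝ) (hφ : IsYoungFunction φ)
    (u : Z → ℝ) (hu : Measurable u) (hu0 : ∀ z, 0 ≤ u z)
    (hfin : ∀ᵐ y ∂μ, ∫⁻ z, K (y, z) * ENNReal.ofReal (u z) ∂ν < ⊤) :
    ∫⁻ y, ENNReal.ofReal
        (φ ((1 / A) * (∫⁻ z, K (y, z) * ENNReal.ofReal (u z) ∂ν).toReal)) ∂μ ≤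
      ENNReal.ofReal (B / A) * ∫⁻ z, ENNReal.ofReal (φ (u z)) ∂ν := by
  have hφm : Measurable φ := (young_continuous hφ).measurable
  set g : Y → ℝ≥0∞ := fun y => ∫⁻ z, K (y, z) * ENNReal.ofReal (φ (u z)) ∂ν with hg
  have hstep : ∀ᵐ y ∂μ,
      ENNReal.ofReal (φ ((1 / A) * (∫⁻ z, K (y, z) * ENNReal.ofReal (u z) ∂ν).toReal)) ≤
        (ENNReal.ofReal A)⁻¹ * g y := by
    filter_upwards [hKA, hfin] with y hA' hf'
    have hKy : Measurable fun z => K (y, z) := hK.comp measurable_prodMk_left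
    have h1 : ∫⁻ z, ENNReal.ofReal (u z) ∂(ν.withDensity fun z => K (y, z)) =
        ∫⁻ z, K (y, z) * ENNReal.ofReal (u z) ∂ν := by
      rw [lintegral_withDensity_eq_lintegral_mul ν hKy hu.ennreal_ofReal]
      rfl
    have h2 : ∫⁻ z, ENNReal.ofReal (φ (u z)) ∂(ν.withDensity fun z => K (y, z)) =
        ∫⁻ z, K (y, z) * ENNReal.ofReal (φ (u z)) ∂ν := by
      rw [lintegral_withDensity_eq_lintegral_mul ν hKy (g := fun z => ENNReal.ofReal (φ (u z))) (hφm.comp hu).ennreal_ofReal]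
      rfl
    have hmuniv : (ν.withDensity fun z => K (y, z)) Set.univ ≤ ENNReal.ofReal A := by
      rw [withDensity_apply _ MeasurableSet.univ, setLIntegral_univ]
      exact hA'
    have := young_aux (ν.withDensity fun z => K (y, z)) hA hmuniv hφ hu hu0
      (by rw [h1]; exact hf')
    rwa [h1, h2] at this
  have hswap : ∫⁻ y, g y ∂μ = ∫⁻ z, (∫⁻ y, K (y, z) ∂μ) * ENNReal.ofReal (φ (u z)) ∂ν := by
    rw [hg]
    rw [lintegral_lintegral_swap (hK.mul
      ((hφm.comp hu).ennreal_ofReal.comp measurable_snd)).aemeasurable]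
    refine lintegral_congr fun z => ?_
    exact lintegral_mul_const' _ _ ofReal_ne_top
  calc ∫⁻ y, ENNReal.ofReal
        (φ ((1 / A) * (∫⁻ z, K (y, z) * ENNReal.ofReal (u z) ∂ν).toReal)) ∂μ
      ≤ ∫⁻ y, (ENNReal.ofReal A)⁻¹ * g y ∂μ := lintegral_mono_ae hstep
    _ = (ENNReal.ofReal A)⁻¹ * ∫⁻ y, g y ∂μ := lintegral_const_mul' _ _ (by simp [hA])
    _ = (ENNReal.ofReal A)⁻¹ * ∫⁻ z, (∫⁻ y, K (y, z) ∂μ) * ENNReal.ofReal (φ (u z)) ∂ν := by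
        rw [hswap]
    _ ≤ (ENNReal.ofReal A)⁻¹ * ∫⁻ z, ENNReal.ofReal B * ENNReal.ofReal (φ (u z)) ∂ν := by
        refine mul_le_mul_right (lintegral_mono_ae ?_) _
        filter_upwards [hKB] with z hz
        exact mul_le_mul_left hz _
    _ = ENNReal.ofReal (B / A) * ∫⁻ z, ENNReal.ofReal (φ (u z)) ∂ν := by
        rw [lintegral_const_mul' _ _ ofReal_ne_top, ENNReal.ofReal_div_of_pos hA,
          ENNReal.div_eq_inv_mul, ← mul_assoc, mul_comm (ENNReal.ofReal A)⁻¹]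
end

section
/- Let n ≥ 1, let y ∈ B(0,1) ⊂ ℝ^n and let z ∈ ℝ^n with z ≠ y. Then ∫_0^1 𝟙_{B(ty, (1−t)/2)}(z)·(1−t)^{−n−1} dt ≤ 2^n/(n·‖z − y‖^n). (In particular, if z ∈ B(ty,(1−t)/2) for some t ∈ [0,1] then ‖z − y‖ ≤ 2(1−t).) -/
open MeasureTheory ENNReal

/-- For `y` in the unit ball of `ℝ^n` and `z ≠ y`,
`∫_0^1 𝟙_{B(ty,(1−t)/2)}(z)·(1−t)^{−n−1} dt ≤ 2^n/(n·‖z−y‖^n)`; moreover if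
`z ∈ B(ty,(1−t)/2)` for some `t ∈ [0,1]` then `‖z − y‖ ≤ 2(1−t)`. -/
theorem lintegral_indicator_cone_kernel_le (n : ℕ) (hn : 1 ≤ n)
    (y z : EuclideanSpace ℝ (Fin n))
    (hy : y ∈ Metric.ball (0 : EuclideanSpace ℝ (Fin n)) 1) (hzy : z ≠ y) :
    (∫⁻ t in Set.Icc (0 : ℝ) 1,
        (Metric.ball (t • y) ((1 - t) / 2)).indicator
          (fun _ => ENNReal.ofReal ((1 - t) ^ (-(n : ℝ) - 1))) z ≤
      ENNReal.ofReal (2 ^ n / (n * ‖z - y‖ ^ n))) ∧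
    ∀ t ∈ Set.Icc (0 : ℝ) 1, z ∈ Metric.ball (t • y) ((1 - t) / 2) →
      ‖z - y‖ ≤ 2 * (1 - t) := by
  have hy1 : ‖y‖ < 1 := by simpa using hy
  have hr : 0 < ‖z - y‖ := by
    rw [norm_pos_iff]; exact sub_ne_zero.mpr hzy
  set r := ‖z - y‖ with hrdef
  have key : ∀ t ∈ Set.Icc (0:ℝ) 1, z ∈ Metric.ball (t • y) ((1 - t)/2) →
      r < 3/2 * (1 - t) := by
    intro t ht hz
    rw [Metric.mem_ball, dist_eq_norm] at hz
    have h1t : (0:ℝ) ≤ 1 - t := by linarith [ht.2]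
    have h2 : ‖t • y - y‖ ≤ 1 - t := by
      have he : t • y - y = (t - 1) • y := by rw [sub_smul, one_smul]
      rw [he, norm_smul, Real.norm_eq_abs, abs_of_nonpos (by linarith [ht.2])]
      nlinarith [norm_nonneg y]
    have h3 : r ≤ ‖z - t • y‖ + ‖t • y - y‖ := by
      have : z - y = (z - t • y) + (t • y - y) := by abel
      rw [hrdef, this]; exact norm_add_le _ _
    linarith
  refine ⟨?_, fun t ht hz => by
    have h1 := key t ht hz
    have : (0:ℝ) ≤ 1 - t := by linarith [ht.2]
    linarith⟩
  -- main integral bound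
  have hnpos : (0:ℝ) < n := by exact_mod_cast hn
  have hrhs_nn : (0:ℝ) ≤ 2 ^ n / (n * r ^ n) := by positivity
  by_cases hr2 : r < 2
  · set b : ℝ := 1 - r / 2 with hb
    have hb0 : 0 < b := by simp only [hb]; linarith
    have hb1 : b < 1 := by simp only [hb]; linarith
    set g : ℝ → ℝ≥0∞ := fun t => ENNReal.ofReal ((1 - t) ^ (-(n:ℝ) - 1)) with hg
    have hgmeas : Measurable fun t => (Set.Icc (0:ℝ) b).indicator g t := by
      apply Measurable.indicator _ measurableSet_Icc
      fun_prop
    have hstep : ∫⁻ t in Set.Icc (0:ℝ) 1,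
        (Metric.ball (t • y) ((1 - t) / 2)).indicator
          (fun _ => ENNReal.ofReal ((1 - t) ^ (-(n : ℝ) - 1))) z ≤
        ∫⁻ t in Set.Icc (0:ℝ) 1, (Set.Icc (0:ℝ) b).indicator g t := by
      apply setLIntegral_mono hgmeas
      intro t ht
      by_cases hz : z ∈ Metric.ball (t • y) ((1 - t) / 2)
      · rw [Set.indicator_of_mem hz, Set.indicator_of_mem]
        constructor
        · exact ht.1
        · have := key t ht hz
          simp only [hb]; linarith
      · rw [Set.indicator_of_notMem hz]; exact zero_le
    have heq1 : ∫⁻ t in Set.Icc (0:ℝ) 1, (Set.Icc (0:ℝ) b).indicator g t =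
        ∫⁻ t in Set.Icc (0:ℝ) b, g t := by
      rw [lintegral_indicator measurableSet_Icc, Measure.restrict_restrict measurableSet_Icc,
        Set.inter_eq_left.mpr (Set.Icc_subset_Icc le_rfl hb1.le)]
    have hcont : ContinuousOn (fun t : ℝ => (1 - t) ^ (-(n:ℝ) - 1)) (Set.Icc 0 b) := by
      intro t ht
      apply ContinuousWithinAt.rpow_const
      · exact (continuous_const.sub continuous_id).continuousWithinAt
      · left; have := ht.2; intro h; simp only [hb] at *; nlinarith
    have hint : IntegrableOn (fun t : ℝ => (1 - t) ^ (-(n:ℝ) - 1)) (Set.Icc 0 b) volume :=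
      hcont.integrableOn_compact isCompact_Icc
    have heq2 : ∫⁻ t in Set.Icc (0:ℝ) b, g t =
        ENNReal.ofReal (∫ t in Set.Icc (0:ℝ) b, (1 - t) ^ (-(n:ℝ) - 1)) := by
      rw [← ofReal_integral_eq_lintegral_ofReal hint]
      filter_upwards [ae_restrict_mem measurableSet_Icc] with t ht
      have : (0:ℝ) < 1 - t := by have := ht.2; simp only [hb] at *; nlinarith
      positivity
    have heq3 : ∫ t in Set.Icc (0:ℝ) b, (1 - t) ^ (-(n:ℝ) - 1) =
        ∫ t in (0:ℝ)..b, (1 - t) ^ (-(n:ℝ) - 1) := by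
      rw [intervalIntegral.integral_of_le hb0.le, ← integral_Icc_eq_integral_Ioc]
    have heq4 : ∫ t in (0:ℝ)..b, (1 - t) ^ (-(n:ℝ) - 1) =
        ((r/2) ^ (-(n:ℝ)) - 1) / n := by
      have hsub := intervalIntegral.integral_comp_sub_left
        (fun u : ℝ => u ^ (-(n:ℝ) - 1)) (a := 0) (b := b) 1
      rw [hsub]
      have h1b : (1:ℝ) - b = r / 2 := by simp [hb]
      rw [h1b, sub_zero]
      rw [integral_rpow]
      · have hne : -(n:ℝ) ≠ 0 := neg_ne_zero.mpr (ne_of_gt hnpos)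
        rw [show -(n:ℝ) - 1 + 1 = -(n:ℝ) by ring]
        rw [Real.one_rpow]
        field_simp
        ring
      · right
        constructor
        · intro h
          have : (n:ℝ) = 0 := by linarith
          exact absurd this (ne_of_gt hnpos)
        · intro h
          rw [Set.mem_uIcc] at h
          rcases h with ⟨h1, _⟩ | ⟨_, h2⟩ <;> linarith
    have hfinal : ((r/2) ^ (-(n:ℝ)) - 1) / n ≤ 2 ^ n / (n * r ^ n) := by
      have hrp : (r/2) ^ (-(n:ℝ)) = 2 ^ n / r ^ n := by
        rw [Real.rpow_neg (by positivity), Real.rpow_natCast, div_pow]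
        rw [inv_div]
      rw [hrp]
      rw [div_le_iff₀ hnpos] at *
      have h1 : 2 ^ n / (n * r ^ n) * n = 2 ^ n / r ^ n := by
        field_simp
      rw [h1]
      linarith
    calc _ ≤ ∫⁻ t in Set.Icc (0:ℝ) 1, (Set.Icc (0:ℝ) b).indicator g t := hstep
      _ = ENNReal.ofReal (((r/2) ^ (-(n:ℝ)) - 1) / n) := by
          rw [heq1, heq2, heq3, heq4]
      _ ≤ _ := ENNReal.ofReal_le_ofReal hfinal
  · -- r ≥ 2 : integrand vanishes
    have hzero : ∀ t ∈ Set.Icc (0:ℝ) 1,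
        (Metric.ball (t • y) ((1 - t) / 2)).indicator
          (fun _ => ENNReal.ofReal ((1 - t) ^ (-(n : ℝ) - 1))) z = 0 := by
      intro t ht
      rw [Set.indicator_of_notMem]
      intro hz
      have := key t ht hz
      have h1 := ht.1
      have h2 := ht.2
      linarith [not_lt.mp hr2]
    calc _ = ∫⁻ t in Set.Icc (0:ℝ) 1, (0:ℝ≥0∞) :=
        setLIntegral_congr_fun measurableSet_Icc hzero
      _ = 0 := lintegral_zero
      _ ≤ _ := zero_le
end

section
/- Let n ≥ 1 and B = B(0,1) ⊂ ℝ^n. There exists a constant C > 0 depending only on n such that for every Young function φ and every function f : B → ℝ that is continuously differentiable on B, setting c = (1/Vol(B(0,1/2)))·∫_{B(0,1/2)} f(x) dx, one has ‖f − c‖_{L^φ(B)} ≤ C·‖ x ↦ ‖Df(x)‖ ‖_{L^φ(B)}, where the Luxemburg norms are taken with respect to Lebesgue measure on B and ‖Df(x)‖ is the operator norm of the Fréchet derivative of f at x. -/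
open MeasureTheory ENNReal Metric Set
set_option maxHeartbeats 1000000

/-- The Luxemburg norm `‖f‖_{L^φ} = inf{α > 0 : ∫ φ(f/α) dμ ≤ 1}`,
with the convention `inf ∅ = ∞`. -/
noncomputable def luxNorm {Z : Type*} [MeasurableSpace Z] (φ : ℝ → ℝ) (μ : Measure Z)
    (f : Z → ℝ) : ℝ≥0∞ :=
  sInf (ENNReal.ofReal '' {α : ℝ | 0 < α ∧ ∫⁻ x, ENNReal.ofReal (φ (f x / α)) ∂μ ≤ 1})

lemma young_smul {φ : ℝ → ℝ} (hc : ConvexOn ℝ Set.univ φ) (h0 : φ 0 = 0)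
    {l u : ℝ} (hl : 0 ≤ l) (hl1 : l ≤ 1) : φ (l * u) ≤ l * φ u := by
  have := hc.2 (Set.mem_univ u) (Set.mem_univ (0:ℝ)) hl
    (by linarith : (0:ℝ) ≤ 1 - l) (by ring)
  simpa [h0] using this

lemma young_mono {φ : ℝ → ℝ} (hc : ConvexOn ℝ Set.univ φ) (h0 : φ 0 = 0)
    (hnn : ∀ t, 0 ≤ φ t) {s u : ℝ} (hs : 0 ≤ s) (hsu : s ≤ u) : φ s ≤ φ u := by
  rcases eq_or_lt_of_le hsu with rfl | hlt
  · exact le_rfl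
  · have hu : 0 < u := lt_of_le_of_lt hs hlt
    have h1 : φ ((s/u) * u) ≤ (s/u) * φ u :=
      young_smul hc h0 (div_nonneg hs hu.le) ((div_le_one hu).2 hsu)
    rw [div_mul_cancel₀ s hu.ne'] at h1
    have : (s/u) * φ u ≤ 1 * φ u :=
      mul_le_mul_of_nonneg_right ((div_le_one hu).2 hsu) (hnn u)
    linarith

lemma cov_lintegral {n : ℕ} (Φ : EuclideanSpace ℝ (Fin n) → ℝ≥0∞) (hΦ : Measurable Φ)
    (a : EuclideanSpace ℝ (Fin n)) {s : ℝ} (hs : s ≠ 0) :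
    ∫⁻ y, Φ (a + s • y) = ENNReal.ofReal (|s ^ n|⁻¹) * ∫⁻ z, Φ z := by
  have h1 : ∫⁻ y, Φ (a + s • y) = ∫⁻ z, Φ (a + z) ∂(Measure.map (s • ·) volume) := by
    rw [lintegral_map (f := fun z => Φ (a + z)) (hΦ.comp (measurable_const_add a))
      (measurable_const_smul s)]
  rw [h1, Measure.map_addHaar_smul volume hs, lintegral_smul_measure,
    finrank_euclideanSpace_fin, lintegral_add_left_eq_self (fun z => Φ z) a, abs_inv, smul_eq_mul]

lemma cov_set_lintegral {n : ℕ} (Φ : EuclideanSpace ℝ (Fin n) → ℝ≥0∞) (hΦ : Measurable Φ)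
    {S : Set (EuclideanSpace ℝ (Fin n))} (hS : MeasurableSet S)
    (a : EuclideanSpace ℝ (Fin n)) {s : ℝ} (hs : 0 < s)
    (him : ∀ y ∈ S, a + s • y ∈ ball (0 : EuclideanSpace ℝ (Fin n)) 1)
    (hint : ∫⁻ z in ball (0 : EuclideanSpace ℝ (Fin n)) 1, Φ z ≤ 1) :
    ∫⁻ y in S, Φ (a + s • y) ≤ ENNReal.ofReal ((s ^ n)⁻¹) := by
  set B : Set (EuclideanSpace ℝ (Fin n)) := ball 0 1 with hB
  have key : ∫⁻ y in S, Φ (a + s • y) ≤ ∫⁻ y, (B.indicator Φ) (a + s • y) := by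
    rw [← lintegral_indicator hS]
    refine lintegral_mono fun y => ?_
    by_cases hy : y ∈ S
    · rw [Set.indicator_of_mem hy, Set.indicator_of_mem (him y hy)]
    · simp [Set.indicator_of_notMem hy]
  have h2 : ∫⁻ y, (B.indicator Φ) (a + s • y) =
      ENNReal.ofReal (|s ^ n|⁻¹) * ∫⁻ z, (B.indicator Φ) z :=
    cov_lintegral _ (hΦ.indicator measurableSet_ball) a hs.ne'
  rw [lintegral_indicator measurableSet_ball] at h2
  calc ∫⁻ y in S, Φ (a + s • y) ≤ ENNReal.ofReal (|s ^ n|⁻¹) * ∫⁻ z in B, Φ z := by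
        rw [← h2]; exact key
    _ ≤ ENNReal.ofReal (|s ^ n|⁻¹) * 1 := mul_le_mul_right hint _
    _ = ENNReal.ofReal ((s ^ n)⁻¹) := by
        rw [mul_one, abs_of_pos (pow_pos hs n)]

section Core

variable {n : ℕ}

local notation "Eu" => EuclideanSpace ℝ (Fin n)

/-- Core inequality. -/
lemma core_ineq {φ : ℝ → ℝ} (hconv : ConvexOn ℝ Set.univ φ)
    (heven : ∀ t, φ (-t) = φ t) (hnn : ∀ t, 0 ≤ φ t) (h0 : φ 0 = 0)
    (f : EuclideanSpace ℝ (Fin n) → ℝ)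
    (hf : ContDiffOn ℝ 1 f (ball (0 : EuclideanSpace ℝ (Fin n)) 1))
    {α C : ℝ} (hα : 0 < α)
    (hC1 : 3/2 ≤ C)
    (hC2 : 3 * 2^n * (volume (ball (0 : EuclideanSpace ℝ (Fin n)) 1)).toReal /
      (2 * (volume (ball (0 : EuclideanSpace ℝ (Fin n)) (1/2))).toReal) ≤ C)
    (hα1 : ∫⁻ x in ball (0 : EuclideanSpace ℝ (Fin n)) 1,
      ENNReal.ofReal (φ (‖fderiv ℝ f x‖ / α)) ≤ 1) :
    ∫⁻ x in ball (0 : EuclideanSpace ℝ (Fin n)) 1,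
      ENNReal.ofReal (φ ((f x - (volume (ball (0 : EuclideanSpace ℝ (Fin n)) (1/2))).toReal⁻¹ *
        ∫ w in ball (0 : EuclideanSpace ℝ (Fin n)) (1/2), f w) / (C * α))) ≤ 1 := by
  -- notation
  set B : Set Eu := ball 0 1 with hBdef
  set B' : Set Eu := ball (0 : Eu) (1/2) with hB'def
  set g : Eu → ℝ := fun z => ‖fderiv ℝ f z‖ with hgdef
  set m : ℝ := (volume B').toReal with hmdef
  set vB : ℝ := (volume B).toReal with hvBdef
  set c : ℝ := m⁻¹ * ∫ w in B', f w with hcdef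
  set μ' : Measure Eu := volume.restrict B' with hμ'def
  set ν : Measure ℝ := volume.restrict (Set.Icc (0:ℝ) 1) with hνdef
  set μx : Measure (Eu × ℝ) := μ'.prod ν with hμxdef
  set Φ : Eu → ℝ≥0∞ := fun z => ENNReal.ofReal (φ (g z / α)) with hΦdef
  have hB'B : B' ⊆ B := ball_subset_ball (by norm_num)
  have hm : 0 < m := by
    apply ENNReal.toReal_pos (measure_ball_pos volume (0:Eu) (by norm_num)).ne'
      measure_ball_lt_top.ne
  have hvB : 0 < vB := by
    apply ENNReal.toReal_pos (measure_ball_pos volume (0:Eu) (by norm_num)).ne'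
      measure_ball_lt_top.ne
  have hC : 0 < C := lt_of_lt_of_le (by norm_num) hC1
  have hφcont : Continuous φ := by
    rw [← continuousOn_univ]
    exact hconv.continuousOn isOpen_univ
  have hgmeas : Measurable g := (measurable_fderiv ℝ f).norm
  have hΦmeas : Measurable Φ :=
    (hφcont.measurable.comp (hgmeas.div_const α)).ennreal_ofReal
  have hfd : ∀ z ∈ B, DifferentiableAt ℝ f z := fun z hz =>
    (hf.differentiableOn one_ne_zero).differentiableAt (isOpen_ball.mem_nhds hz)
  have hDcont : ContinuousOn (fderiv ℝ f) B :=
    hf.continuousOn_fderiv_of_isOpen isOpen_ball le_rfl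
  have hgcont : ContinuousOn g B := hDcont.norm
  have hfc : ContinuousOn f B := hf.continuousOn
  have hfint : IntegrableOn f B' volume := by
    have h1 : IntegrableOn f (closedBall (0:Eu) (1/2)) volume := by
      apply ContinuousOn.integrableOn_compact (isCompact_closedBall _ _)
      exact hfc.mono (fun z hz => by
        simp only [hBdef, mem_ball, mem_closedBall] at *
        rw [dist_zero_right] at *
        linarith)
    exact h1.mono_set ball_subset_closedBall
  haveI : IsFiniteMeasure μ' :=
    ⟨by rw [hμ'def, Measure.restrict_apply_univ]; exact measure_ball_lt_top⟩
  haveI : IsFiniteMeasure ν :=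
    ⟨by rw [hνdef, Measure.restrict_apply_univ, Real.volume_Icc]; norm_num⟩
  haveI : IsFiniteMeasure μx := by rw [hμxdef]; infer_instance
  have hμxuniv : (μx Set.univ).toReal = m := by
    rw [hμxdef, ← Set.univ_prod_univ, Measure.prod_prod, hμ'def, hνdef,
      Measure.restrict_apply_univ, Measure.restrict_apply_univ, Real.volume_Icc]
    simp [hmdef]
  haveI : NeZero μx := by
    constructor
    intro h
    have := hμxuniv
    rw [h] at this
    simp only [Measure.coe_zero, Pi.zero_apply, ENNReal.toReal_zero] at this
    exact hm.ne this
  -- pointwise estimates for x ∈ B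
  have key : ∀ x ∈ B, ENNReal.ofReal (φ ((f x - c) / (C * α))) ≤
      ENNReal.ofReal (3 / (2 * C * m)) *
        ∫⁻ q : Eu × ℝ, Φ ((1 - q.2) • q.1 + q.2 • x) ∂μx := by
    intro x hx
    have hxB : ‖x‖ < 1 := by simpa [hBdef, mem_ball_zero_iff] using hx
    set r₀ : ℝ := max (1/2) ‖x‖ with hr₀def
    have hr₀1 : r₀ < 1 := max_lt (by norm_num) hxB
    have hr₀0 : (0:ℝ) < r₀ := lt_of_lt_of_le (by norm_num) (le_max_left _ _)
    have hsub : closedBall (0:Eu) r₀ ⊆ B := fun z hz => by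
      rw [hBdef, mem_ball_zero_iff]
      exact lt_of_le_of_lt (mem_closedBall_zero_iff.1 hz) hr₀1
    have hmem : ∀ y ∈ B', ∀ t ∈ Set.Icc (0:ℝ) 1,
        (1-t) • y + t • x ∈ closedBall (0:Eu) r₀ := by
      intro y hy t ht
      rw [mem_closedBall_zero_iff]
      have hy' : ‖y‖ ≤ r₀ :=
        le_trans (mem_ball_zero_iff.1 hy).le (le_max_left _ _)
      have hx' : ‖x‖ ≤ r₀ := le_max_right _ _
      calc ‖(1-t) • y + t • x‖ ≤ ‖(1-t) • y‖ + ‖t • x‖ := norm_add_le _ _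
        _ = (1-t) * ‖y‖ + t * ‖x‖ := by
            rw [norm_smul, norm_smul, Real.norm_eq_abs, Real.norm_eq_abs,
              abs_of_nonneg (show (0:ℝ) ≤ 1 - t by linarith [ht.2]), abs_of_nonneg ht.1]
        _ ≤ (1-t) * r₀ + t * r₀ := by
            have h1t : (0:ℝ) ≤ 1 - t := by linarith [ht.2]
            have hA := mul_le_mul_of_nonneg_left hy' h1t
            have hB := mul_le_mul_of_nonneg_left hx' ht.1
            linarith
        _ = r₀ := by ring
    obtain ⟨M, hM⟩ : ∃ M, ∀ z ∈ closedBall (0:Eu) r₀, g z ≤ M := by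
      obtain ⟨M, hM⟩ := (isCompact_closedBall (0:Eu) r₀).exists_bound_of_continuousOn
        (hgcont.mono hsub)
      exact ⟨M, fun z hz => by
        have := hM z hz
        rwa [Real.norm_eq_abs, abs_of_nonneg (norm_nonneg _)] at this⟩
    have hM0 : 0 ≤ M := le_trans (norm_nonneg _) (hM 0 (mem_closedBall_self hr₀0.le))
    set p : Eu × ℝ → ℝ := fun q => g ((1 - q.2) • q.1 + q.2 • x) with hpdef
    have hpcont_pre : Continuous fun q : Eu × ℝ => (1 - q.2) • q.1 + q.2 • x :=
      ((continuous_const.sub continuous_snd).smul continuous_fst).add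
        (continuous_snd.smul continuous_const)
    have hpmeas : Measurable p := hgmeas.comp hpcont_pre.measurable
    have haeprod : ∀ᵐ q ∂μx, q ∈ B' ×ˢ Set.Icc (0:ℝ) 1 := by
      rw [hμxdef, hμ'def, hνdef, Measure.prod_restrict]
      exact ae_restrict_mem (measurableSet_ball.prod measurableSet_Icc)
    have hpbound : ∀ q ∈ B' ×ˢ Set.Icc (0:ℝ) 1, p q ≤ M := fun q hq =>
      hM _ (hmem q.1 hq.1 q.2 hq.2)
    have hpnn : ∀ q, 0 ≤ p q := fun q => norm_nonneg _
    have hpint : Integrable p μx := by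
      refine Integrable.mono' (integrable_const M) hpmeas.aestronglyMeasurable ?_
      filter_upwards [haeprod] with q hq
      rw [Real.norm_eq_abs, abs_of_nonneg (hpnn q)]
      exact hpbound q hq
    -- FTC along segments
    have hftc : ∀ y ∈ B', |f x - f y| ≤ (3/2) * ∫ t in Set.Icc (0:ℝ) 1, p (y, t) := by
      intro y hy
      set γ : ℝ → Eu := fun t => (1 - t) • y + t • x with hγdef
      have hγmem : ∀ t ∈ Set.Icc (0:ℝ) 1, γ t ∈ B := fun t ht => hsub (hmem y hy t ht)
      have hγcont : Continuous γ :=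
        ((continuous_const.sub continuous_id).smul continuous_const).add
          (continuous_id.smul continuous_const)
      have hγD : ∀ t : ℝ, HasDerivAt γ (x - y) t := by
        intro t
        have h1 : HasDerivAt (fun t : ℝ => t • x) x t := by
          simpa using (hasDerivAt_id t).smul_const x
        have h2 : HasDerivAt (fun t : ℝ => (1 - t) • y) (-y) t := by
          have h3 : HasDerivAt (fun u : ℝ => u • y) y t := by
            simpa using (hasDerivAt_id t).smul_const y
          have h5 : HasDerivAt (fun u : ℝ => (1:ℝ) • y - u • y) (0 - y) t :=
            (hasDerivAt_const t ((1:ℝ) • y)).sub h3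
          have h6 : (fun u : ℝ => (1 - u) • y) = fun u : ℝ => (1:ℝ) • y - u • y := by
            funext u; rw [sub_smul]
          rw [h6]
          simpa using h5
        have := h2.add h1
        rw [show x - y = -y + x by abel]
        exact this
      have hDγcont : ContinuousOn (fun t => fderiv ℝ f (γ t)) (Set.Icc (0:ℝ) 1) :=
        hDcont.comp hγcont.continuousOn hγmem
      have hFD : ∀ t ∈ Set.uIcc (0:ℝ) 1,
          HasDerivAt (fun t => f (γ t)) ((fderiv ℝ f (γ t)) (x - y)) t := by
        intro t ht
        rw [Set.uIcc_of_le zero_le_one] at ht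
        exact ((hfd _ (hγmem t ht)).hasFDerivAt.comp_hasDerivAt t (hγD t))
      have hDcont' : ContinuousOn (fun t => (fderiv ℝ f (γ t)) (x - y))
          (Set.Icc (0:ℝ) 1) := hDγcont.clm_apply continuousOn_const
      have hgγcont : ContinuousOn (fun t => g (γ t)) (Set.Icc (0:ℝ) 1) := hDγcont.norm
      have hint1 : IntervalIntegrable (fun t => (fderiv ℝ f (γ t)) (x - y)) volume 0 1 :=
        ContinuousOn.intervalIntegrable (by rw [Set.uIcc_of_le zero_le_one]; exact hDcont')
      have hftc0 : ∫ t in (0:ℝ)..1, (fderiv ℝ f (γ t)) (x - y) = f (γ 1) - f (γ 0) :=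
        intervalIntegral.integral_eq_sub_of_hasDerivAt hFD hint1
      have hγ1 : γ 1 = x := by simp [hγdef]
      have hγ0 : γ 0 = y := by simp [hγdef]
      have hfxy : f x - f y = ∫ t in (0:ℝ)..1, (fderiv ℝ f (γ t)) (x - y) := by
        rw [hftc0, hγ1, hγ0]
      have habs : |f x - f y| ≤ ∫ t in (0:ℝ)..1, |(fderiv ℝ f (γ t)) (x - y)| := by
        rw [hfxy]
        exact intervalIntegral.abs_integral_le_integral_abs zero_le_one
      have hptw : ∀ t ∈ Set.Icc (0:ℝ) 1,
          |(fderiv ℝ f (γ t)) (x - y)| ≤ (3/2) * g (γ t) := by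
        intro t ht
        calc |(fderiv ℝ f (γ t)) (x - y)| = ‖(fderiv ℝ f (γ t)) (x - y)‖ := rfl
          _ ≤ ‖fderiv ℝ f (γ t)‖ * ‖x - y‖ := ContinuousLinearMap.le_opNorm _ _
          _ ≤ ‖fderiv ℝ f (γ t)‖ * (3/2) := by
              apply mul_le_mul_of_nonneg_left ?_ (norm_nonneg _)
              have h1 : ‖x - y‖ ≤ ‖x‖ + ‖y‖ := norm_sub_le _ _
              have hy' : ‖y‖ < 1/2 := mem_ball_zero_iff.1 hy
              linarith
          _ = (3/2) * g (γ t) := mul_comm _ _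
      have hint2 : IntervalIntegrable (fun t => (3/2) * g (γ t)) volume 0 1 :=
        ContinuousOn.intervalIntegrable (by
          rw [Set.uIcc_of_le zero_le_one]
          exact continuousOn_const.mul hgγcont)
      have hintabs : IntervalIntegrable (fun t => |(fderiv ℝ f (γ t)) (x - y)|)
          volume 0 1 :=
        ContinuousOn.intervalIntegrable (by
          rw [Set.uIcc_of_le zero_le_one]
          exact hDcont'.abs)
      have hmono : ∫ t in (0:ℝ)..1, |(fderiv ℝ f (γ t)) (x - y)| ≤
          ∫ t in (0:ℝ)..1, (3/2) * g (γ t) :=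
        intervalIntegral.integral_mono_on zero_le_one hintabs hint2 hptw
      have hconv1 : ∫ t in (0:ℝ)..1, (3/2) * g (γ t) =
          (3/2) * ∫ t in Set.Icc (0:ℝ) 1, p (y, t) := by
        rw [intervalIntegral.integral_of_le zero_le_one, ← integral_Icc_eq_integral_Ioc,
          integral_const_mul]
      linarith
    -- the integral representation of |f x - c|
    have hIdef : ∫ q, p q ∂μx = ∫ y in B', (∫ t in Set.Icc (0:ℝ) 1, p (y, t)) ∂volume := by
      rw [hμxdef, integral_prod p hpint]
    have hInn : 0 ≤ ∫ q, p q ∂μx := integral_nonneg hpnn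
    have hfxc : |f x - c| ≤ 3 / (2*m) * ∫ q, p q ∂μx := by
      have hconstint : IntegrableOn (fun _ : Eu => f x) B' volume := by
        rw [integrableOn_const_iff]
        exact Or.inr measure_ball_lt_top
      have hsplit : ∫ y in B', (f x - f y) ∂volume = m * f x - ∫ y in B', f y ∂volume := by
        rw [integral_sub hconstint hfint, setIntegral_const, smul_eq_mul, hmdef]; rfl
      have h1 : f x - c = m⁻¹ * ∫ y in B', (f x - f y) ∂volume := by
        rw [hsplit, hcdef]
        field_simp
        ring
      have h2 : |∫ y in B', (f x - f y) ∂volume| ≤ ∫ y in B', |f x - f y| ∂volume := by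
        simpa [Real.norm_eq_abs] using
          norm_integral_le_integral_norm (μ := volume.restrict B') (fun y => f x - f y)
      have h3 : ∫ y in B', |f x - f y| ∂volume ≤
          ∫ y in B', (3/2) * ∫ t in Set.Icc (0:ℝ) 1, p (y, t) ∂volume := by
        apply setIntegral_mono_on ?_ ?_ measurableSet_ball (fun y hy => hftc y hy)
        · exact (hconstint.sub hfint).abs
        · exact (hpint.integral_prod_left).const_mul (3/2)
      have h4 : ∫ y in B', ((3/2) * ∫ t in Set.Icc (0:ℝ) 1, p (y, t)) ∂volume =
          (3/2) * ∫ q, p q ∂μx := by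
        rw [integral_const_mul, hIdef]
      rw [h1, abs_mul, abs_of_nonneg (inv_nonneg.2 hm.le)]
      calc m⁻¹ * |∫ y in B', (f x - f y) ∂volume| ≤
          m⁻¹ * ((3/2) * ∫ q, p q ∂μx) := by
            apply mul_le_mul_of_nonneg_left ?_ (inv_nonneg.2 hm.le)
            rw [← h4]
            exact le_trans h2 h3
        _ = 3 / (2*m) * ∫ q, p q ∂μx := by ring
    -- Jensen
    set pα : Eu × ℝ → ℝ := fun q => p q / α with hpαdef
    have hpαint : Integrable pα μx := hpint.div_const α
    have hφpαint : Integrable (fun q => φ (pα q)) μx := by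
      refine Integrable.mono' (integrable_const (φ (M / α)))
        ((hφcont.measurable.comp ((hpmeas.div_const α))).aestronglyMeasurable) ?_
      filter_upwards [haeprod] with q hq
      rw [Real.norm_eq_abs, abs_of_nonneg (hnn _)]
      exact young_mono hconv h0 hnn (div_nonneg (hpnn q) hα.le)
        (div_le_div_of_nonneg_right (hpbound q hq) hα.le)
    have hJensen : φ (⨍ q, pα q ∂μx) ≤ ⨍ q, φ (pα q) ∂μx := by
      have := hconv.map_average_le hφcont.continuousOn isClosed_univ
        (Filter.Eventually.of_forall fun q => Set.mem_univ (pα q)) hpαint hφpαint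
      exact this
    have havg : ⨍ q, pα q ∂μx = m⁻¹ * (∫ q, p q ∂μx) / α := by
      rw [average_eq, measureReal_def, hμxuniv, smul_eq_mul, hpαdef]
      rw [integral_div]
      ring
    have havgnn : 0 ≤ ⨍ q, pα q ∂μx := by
      rw [havg]; positivity
    have hCα : 0 < C * α := mul_pos hC hα
    have hchain1 : φ ((f x - c)/(C*α)) = φ (|f x - c|/(C*α)) := by
      rcases abs_cases (f x - c) with ⟨h,_⟩|⟨h,_⟩
      · rw [h]
      · rw [h, ← heven ((f x - c)/(C*α)), neg_div]
    have hchain2 : φ (|f x - c|/(C*α)) ≤ φ (3/(2*C) * ⨍ q, pα q ∂μx) := by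
      apply young_mono hconv h0 hnn (div_nonneg (abs_nonneg _) hCα.le)
      rw [havg]
      calc |f x - c| / (C*α) ≤ (3 / (2*m) * ∫ q, p q ∂μx) / (C*α) :=
            div_le_div_of_nonneg_right hfxc hCα.le
        _ = 3/(2*C) * (m⁻¹ * (∫ q, p q ∂μx) / α) := by ring
    have hchain3 : φ (3/(2*C) * ⨍ q, pα q ∂μx) ≤ 3/(2*C) * ⨍ q, φ (pα q) ∂μx := by
      have hl : 0 ≤ 3/(2*C) := by positivity
      have hl1 : 3/(2*C) ≤ 1 := by
        rw [div_le_one (by positivity)]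
        linarith
      calc φ (3/(2*C) * ⨍ q, pα q ∂μx) ≤ 3/(2*C) * φ (⨍ q, pα q ∂μx) :=
            young_smul hconv h0 hl hl1
        _ ≤ 3/(2*C) * ⨍ q, φ (pα q) ∂μx := mul_le_mul_of_nonneg_left hJensen hl
    have hfinalreal : φ ((f x - c)/(C*α)) ≤ 3/(2*C*m) * ∫ q, φ (pα q) ∂μx := by
      have heq : 3/(2*C) * ⨍ q, φ (pα q) ∂μx = 3/(2*C*m) * ∫ q, φ (pα q) ∂μx := by
        rw [average_eq, measureReal_def, hμxuniv, smul_eq_mul]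
        ring
      rw [hchain1]
      calc φ (|f x - c|/(C*α)) ≤ 3/(2*C) * ⨍ q, φ (pα q) ∂μx :=
            le_trans hchain2 hchain3
        _ = 3/(2*C*m) * ∫ q, φ (pα q) ∂μx := heq
    calc ENNReal.ofReal (φ ((f x - c) / (C * α))) ≤
        ENNReal.ofReal (3/(2*C*m) * ∫ q, φ (pα q) ∂μx) :=
          ENNReal.ofReal_le_ofReal hfinalreal
      _ = ENNReal.ofReal (3/(2*C*m)) * ENNReal.ofReal (∫ q, φ (pα q) ∂μx) :=
          ENNReal.ofReal_mul (by positivity)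
      _ = ENNReal.ofReal (3/(2*C*m)) * ∫⁻ q, ENNReal.ofReal (φ (pα q)) ∂μx := by
          rw [ofReal_integral_eq_lintegral_ofReal hφpαint
            (Filter.Eventually.of_forall fun q => hnn _)]
      _ = ENNReal.ofReal (3 / (2 * C * m)) *
          ∫⁻ q : Eu × ℝ, Φ ((1 - q.2) • q.1 + q.2 • x) ∂μx := rfl
  -- sum over x and Tonelli
  set J : Eu → ℝ≥0∞ := fun x => ∫⁻ q : Eu × ℝ, Φ ((1 - q.2) • q.1 + q.2 • x) ∂μx with hJdef
  have hGcont : Continuous fun w : Eu × (Eu × ℝ) => (1 - w.2.2) • w.2.1 + w.2.2 • w.1 :=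
    ((continuous_const.sub (continuous_snd.comp continuous_snd)).smul
      (continuous_fst.comp continuous_snd)).add
      ((continuous_snd.comp continuous_snd).smul continuous_fst)
  have hGmeas : Measurable fun w : Eu × (Eu × ℝ) =>
      Φ ((1 - w.2.2) • w.2.1 + w.2.2 • w.1) := hΦmeas.comp hGcont.measurable
  have hJmeas : Measurable J := hGmeas.lintegral_prod_right'
  have h2npos : (0:ℝ) < 2 ^ n := by positivity
  -- inner rearrangement: J x as iterated integral with t outside
  have hswap1 : ∀ x : Eu, J x =
      ∫⁻ t, (∫⁻ y, Φ ((1 - t) • y + t • x) ∂μ') ∂ν := by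
    intro x
    have hmeas2 : Measurable fun q : Eu × ℝ => Φ ((1 - q.2) • q.1 + q.2 • x) :=
      hΦmeas.comp (((continuous_const.sub continuous_snd).smul continuous_fst).add
        (continuous_snd.smul continuous_const)).measurable
    calc J x = ∫⁻ y, (∫⁻ t, Φ ((1 - t) • y + t • x) ∂ν) ∂μ' :=
          lintegral_prod _ hmeas2.aemeasurable
      _ = ∫⁻ t, (∫⁻ y, Φ ((1 - t) • y + t • x) ∂μ') ∂ν :=
          lintegral_lintegral_swap hmeas2.aemeasurable
  -- swap x and t
  set K : Eu → ℝ → ℝ≥0∞ := fun x t => ∫⁻ y, Φ ((1 - t) • y + t • x) ∂μ' with hKdef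
  have hKmeas : Measurable fun w : Eu × ℝ => K w.1 w.2 := by
    have hcont : Continuous fun w : (Eu × ℝ) × Eu => (1 - w.1.2) • w.2 + w.1.2 • w.1.1 :=
      ((continuous_const.sub (continuous_snd.comp continuous_fst)).smul continuous_snd).add
        ((continuous_snd.comp continuous_fst).smul (continuous_fst.comp continuous_fst))
    exact (hΦmeas.comp hcont.measurable).lintegral_prod_right'
  have hswap2 : ∫⁻ x in B, J x ∂volume = ∫⁻ t, (∫⁻ x in B, K x t ∂volume) ∂ν := by
    calc ∫⁻ x in B, J x ∂volume
        = ∫⁻ x in B, (∫⁻ t, K x t ∂ν) ∂volume := lintegral_congr fun x => hswap1 x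
      _ = ∫⁻ t, (∫⁻ x in B, K x t ∂volume) ∂ν :=
          lintegral_lintegral_swap hKmeas.aemeasurable
  -- the crucial per-t bound
  have hbound : ∀ t ∈ Set.Icc (0:ℝ) 1,
      (∫⁻ x in B, K x t ∂volume) ≤ ENNReal.ofReal (2 ^ n) * volume B := by
    intro t ht
    rcases le_or_gt t (1/2) with hhalf | hhalf
    · -- t small: use the y-integral
      have h1t : (0:ℝ) < 1 - t := by linarith
      have hinner : ∀ x ∈ B, K x t ≤ ENNReal.ofReal (2 ^ n) := by
        intro x hxB
        have hxn : ‖x‖ < 1 := mem_ball_zero_iff.1 hxB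
        have heqI : K x t = ∫⁻ y in B', Φ (t • x + (1 - t) • y) ∂volume :=
          lintegral_congr fun y => by rw [add_comm]
        rw [heqI]
        refine le_trans (cov_set_lintegral Φ hΦmeas (measurableSet_ball :
            MeasurableSet B') (t • x) h1t ?_ hα1) (ENNReal.ofReal_le_ofReal ?_)
        · intro y hy
          have hyn : ‖y‖ < 1/2 := mem_ball_zero_iff.1 hy
          rw [mem_ball_zero_iff]
          calc ‖t • x + (1 - t) • y‖ ≤ ‖t • x‖ + ‖(1 - t) • y‖ := norm_add_le _ _
            _ = t * ‖x‖ + (1 - t) * ‖y‖ := by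
                rw [norm_smul, norm_smul, Real.norm_eq_abs, Real.norm_eq_abs,
                  abs_of_nonneg ht.1, abs_of_nonneg h1t.le]
            _ < 1 := by nlinarith [mul_le_mul_of_nonneg_left hxn.le ht.1,
                mul_lt_mul_of_pos_left hyn h1t, norm_nonneg x, norm_nonneg y]
        · have hp1 : (1/2:ℝ)^n ≤ (1-t)^n := pow_le_pow_left₀ (by norm_num) (by linarith) n
          have hp2 : ((1-t)^n)⁻¹ ≤ ((1/2:ℝ)^n)⁻¹ :=
            inv_anti₀ (pow_pos (by norm_num) n) hp1
          have hp3 : ((1/2:ℝ)^n)⁻¹ = 2^n := by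
            rw [div_pow, one_pow, inv_div, div_one]
          rw [← hp3]
          exact hp2
      calc ∫⁻ x in B, K x t ∂volume ≤ ∫⁻ _ in B, ENNReal.ofReal (2 ^ n) ∂volume :=
            setLIntegral_mono measurable_const hinner
        _ = ENNReal.ofReal (2 ^ n) * volume B := setLIntegral_const _ _
    · -- t large: swap x and y, use the x-integral
      have htpos : (0:ℝ) < t := by linarith
      have hswap3 : ∫⁻ x in B, K x t ∂volume =
          ∫⁻ y, (∫⁻ x in B, Φ ((1 - t) • y + t • x) ∂volume) ∂μ' := by
        have hm3 : Measurable (fun w : Eu × Eu => Φ ((1 - t) • w.2 + t • w.1)) :=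
          hΦmeas.comp
            (by fun_prop : Continuous fun w : Eu × Eu => (1 - t) • w.2 + t • w.1).measurable
        exact lintegral_lintegral_swap hm3.aemeasurable
      rw [hswap3]
      have hinner : ∀ y ∈ B', (∫⁻ x in B, Φ ((1 - t) • y + t • x) ∂volume) ≤
          ENNReal.ofReal (2 ^ n) := by
        intro y hy
        have hyn : ‖y‖ < 1/2 := mem_ball_zero_iff.1 hy
        refine le_trans (cov_set_lintegral Φ hΦmeas (measurableSet_ball :
            MeasurableSet B) ((1 - t) • y) htpos ?_ hα1) (ENNReal.ofReal_le_ofReal ?_)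
        · intro x hxB
          have hxn : ‖x‖ < 1 := mem_ball_zero_iff.1 hxB
          have h1t' : (0:ℝ) ≤ 1 - t := by linarith [ht.2]
          rw [mem_ball_zero_iff]
          calc ‖(1 - t) • y + t • x‖ ≤ ‖(1 - t) • y‖ + ‖t • x‖ := norm_add_le _ _
            _ = (1 - t) * ‖y‖ + t * ‖x‖ := by
                rw [norm_smul, norm_smul, Real.norm_eq_abs, Real.norm_eq_abs,
                  abs_of_nonneg h1t', abs_of_nonneg ht.1]
            _ < 1 := by nlinarith [mul_le_mul_of_nonneg_left hyn.le h1t',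
                mul_lt_mul_of_pos_left hxn htpos, norm_nonneg x, norm_nonneg y]
        · have hp1 : (1/2:ℝ)^n ≤ t^n := pow_le_pow_left₀ (by norm_num) hhalf.le n
          have hp2 : (t^n)⁻¹ ≤ ((1/2:ℝ)^n)⁻¹ :=
            inv_anti₀ (pow_pos (by norm_num) n) hp1
          have hp3 : ((1/2:ℝ)^n)⁻¹ = 2^n := by
            rw [div_pow, one_pow, inv_div, div_one]
          rw [← hp3]
          exact hp2
      calc ∫⁻ y, (∫⁻ x in B, Φ ((1 - t) • y + t • x) ∂volume) ∂μ'
          ≤ ∫⁻ _ in B', ENNReal.ofReal (2 ^ n) ∂volume :=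
            setLIntegral_mono measurable_const hinner
        _ = ENNReal.ofReal (2 ^ n) * volume B' := setLIntegral_const _ _
        _ ≤ ENNReal.ofReal (2 ^ n) * volume B := mul_le_mul_right (measure_mono hB'B) _
  -- integrate the bound over t
  have hC3 : ∫⁻ x in B, J x ∂volume ≤ ENNReal.ofReal (2 ^ n * vB) := by
    rw [hswap2]
    have hvolB : volume B = ENNReal.ofReal vB :=
      (ENNReal.ofReal_toReal measure_ball_lt_top.ne).symm
    calc ∫⁻ t, (∫⁻ x in B, K x t ∂volume) ∂ν
        ≤ ∫⁻ _ in Set.Icc (0:ℝ) 1, (ENNReal.ofReal (2 ^ n) * volume B) ∂volume :=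
          setLIntegral_mono measurable_const hbound
      _ = (ENNReal.ofReal (2 ^ n) * volume B) * volume (Set.Icc (0:ℝ) 1) :=
          setLIntegral_const _ _
      _ = ENNReal.ofReal (2 ^ n) * ENNReal.ofReal vB := by
          rw [Real.volume_Icc, hvolB]
          norm_num
      _ = ENNReal.ofReal (2 ^ n * vB) := (ENNReal.ofReal_mul h2npos.le).symm
  -- put everything together
  have hconst_ne : (ENNReal.ofReal (3 / (2 * C * m))) ≠ ⊤ := ENNReal.ofReal_ne_top
  calc ∫⁻ x in B, ENNReal.ofReal (φ ((f x - c) / (C * α))) ∂volume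
      ≤ ∫⁻ x in B, ENNReal.ofReal (3 / (2 * C * m)) * J x ∂volume :=
        setLIntegral_mono (measurable_const.mul hJmeas) key
    _ = ENNReal.ofReal (3 / (2 * C * m)) * ∫⁻ x in B, J x ∂volume :=
        lintegral_const_mul' _ _ hconst_ne
    _ ≤ ENNReal.ofReal (3 / (2 * C * m)) * ENNReal.ofReal (2 ^ n * vB) :=
        mul_le_mul_right hC3 _
    _ = ENNReal.ofReal (3 / (2 * C * m) * (2 ^ n * vB)) :=
        (ENNReal.ofReal_mul (by positivity)).symm
    _ ≤ 1 := by
        rw [← ENNReal.ofReal_one]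
        apply ENNReal.ofReal_le_ofReal
        have hkey : 3 * 2 ^ n * vB ≤ C * (2 * m) :=
          (div_le_iff₀ (by positivity : (0:ℝ) < 2 * m)).1 hC2
        rw [div_mul_eq_mul_div, div_le_one (by positivity)]
        nlinarith

end Core

/-- Orlicz–Poincaré inequality on the unit ball of `ℝ^n`: there is a constant `C > 0`
depending only on `n` such that for every Young function `φ` and every `C¹` function
`f` on the unit ball `B`, with `c` the average of `f` over `B(0,1/2)`, one has
`‖f − c‖_{L^φ(B)} ≤ C·‖‖Df‖‖_{L^φ(B)}`. -/
theorem orlicz_poincare_unit_ball (n : ℕ) (hn : 1 ≤ n) :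
    ∃ C : ℝ, 0 < C ∧ ∀ φ : ℝ → ℝ, IsYoungFunction φ →
      ∀ f : EuclideanSpace ℝ (Fin n) → ℝ,
        ContDiffOn ℝ 1 f (Metric.ball (0 : EuclideanSpace ℝ (Fin n)) 1) →
        luxNorm φ (volume.restrict (Metric.ball (0 : EuclideanSpace ℝ (Fin n)) 1))
            (fun x => f x -
              (volume (Metric.ball (0 : EuclideanSpace ℝ (Fin n)) (1 / 2))).toReal⁻¹ *
                ∫ w in Metric.ball (0 : EuclideanSpace ℝ (Fin n)) (1 / 2), f w) ≤
          ENNReal.ofReal C *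
            luxNorm φ (volume.restrict (Metric.ball (0 : EuclideanSpace ℝ (Fin n)) 1))
              (fun x => ‖fderiv ℝ f x‖) := by
  classical
  set C : ℝ := 3/2 + 3 * 2^n * (volume (Metric.ball (0 : EuclideanSpace ℝ (Fin n)) 1)).toReal /
    (2 * (volume (Metric.ball (0 : EuclideanSpace ℝ (Fin n)) (1/2))).toReal) with hCdef
  have hCpos : 0 < C := by
    have h1 : 0 ≤ 3 * 2^n * (volume (Metric.ball (0 : EuclideanSpace ℝ (Fin n)) 1)).toReal /
        (2 * (volume (Metric.ball (0 : EuclideanSpace ℝ (Fin n)) (1/2))).toReal) := by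
      apply div_nonneg
      · positivity
      · positivity
    rw [hCdef]
    linarith
  refine ⟨C, hCpos, ?_⟩
  intro φ hφ f hf
  obtain ⟨hconv, heven, hnn, hiff⟩ := hφ
  have h0 : φ 0 = 0 := (hiff 0).2 rfl
  have hC1 : 3/2 ≤ C := by
    rw [hCdef]
    have : 0 ≤ 3 * 2^n * (volume (Metric.ball (0 : EuclideanSpace ℝ (Fin n)) 1)).toReal /
        (2 * (volume (Metric.ball (0 : EuclideanSpace ℝ (Fin n)) (1/2))).toReal) := by
      apply div_nonneg <;> positivity
    linarith
  have hC2 : 3 * 2^n * (volume (Metric.ball (0 : EuclideanSpace ℝ (Fin n)) 1)).toReal /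
      (2 * (volume (Metric.ball (0 : EuclideanSpace ℝ (Fin n)) (1/2))).toReal) ≤ C := by
    rw [hCdef]
    linarith
  set T : Set ℝ := {α : ℝ | 0 < α ∧
    ∫⁻ x, ENNReal.ofReal (φ (‖fderiv ℝ f x‖ / α))
      ∂(volume.restrict (Metric.ball (0 : EuclideanSpace ℝ (Fin n)) 1)) ≤ 1} with hTdef
  set L : ℝ≥0∞ := luxNorm φ (volume.restrict (Metric.ball (0 : EuclideanSpace ℝ (Fin n)) 1))
    (fun x => f x - (volume (Metric.ball (0 : EuclideanSpace ℝ (Fin n)) (1/2))).toReal⁻¹ *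
      ∫ w in Metric.ball (0 : EuclideanSpace ℝ (Fin n)) (1/2), f w) with hLdef
  have hRHS : luxNorm φ (volume.restrict (Metric.ball (0 : EuclideanSpace ℝ (Fin n)) 1))
      (fun x => ‖fderiv ℝ f x‖) = sInf (ENNReal.ofReal '' T) := rfl
  rw [hRHS]
  have hmain : ∀ α ∈ T, L ≤ ENNReal.ofReal C * ENNReal.ofReal α := by
    intro α hαT
    obtain ⟨hα, hαint⟩ := hαT
    have hcore := core_ineq hconv heven hnn h0 f hf hα hC1 hC2 hαint
    have hmem : ENNReal.ofReal (C * α) ∈ (ENNReal.ofReal ''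
        {β : ℝ | 0 < β ∧ ∫⁻ x, ENNReal.ofReal (φ ((f x -
          (volume (Metric.ball (0 : EuclideanSpace ℝ (Fin n)) (1/2))).toReal⁻¹ *
            ∫ w in Metric.ball (0 : EuclideanSpace ℝ (Fin n)) (1/2), f w) / β))
          ∂(volume.restrict (Metric.ball (0 : EuclideanSpace ℝ (Fin n)) 1)) ≤ 1}) := by
      exact ⟨C * α, ⟨mul_pos hCpos hα, hcore⟩, rfl⟩
    calc L ≤ ENNReal.ofReal (C * α) := sInf_le hmem
      _ = ENNReal.ofReal C * ENNReal.ofReal α := ENNReal.ofReal_mul hCpos.le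
  rcases Set.eq_empty_or_nonempty T with hT | hT
  · rw [hT]
    simp only [Set.image_empty, sInf_empty]
    rw [ENNReal.mul_top (by simpa using (ENNReal.ofReal_pos.2 hCpos).ne')]
    exact le_top
  · set k : ℝ≥0∞ := ENNReal.ofReal C with hkdef
    have hk0 : k ≠ 0 := (ENNReal.ofReal_pos.2 hCpos).ne'
    have hktop : k ≠ ⊤ := ENNReal.ofReal_ne_top
    have hdiv : L / k ≤ sInf (ENNReal.ofReal '' T) := by
      apply le_sInf
      rintro b ⟨α, hαT, rfl⟩
      rw [ENNReal.div_le_iff_le_mul (Or.inl hk0) (Or.inl hktop)]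
      rw [mul_comm]
      exact hmain α hαT
    calc L = L / k * k := (ENNReal.div_mul_cancel hk0 hktop).symm
      _ ≤ sInf (ENNReal.ofReal '' T) * k := mul_le_mul_left hdiv k
      _ = k * sInf (ENNReal.ofReal '' T) := mul_comm _ _
end

section
/- Let n ≥ 1 and let u : ℝ^n → [0,∞] be measurable with u = 0 outside B(0,1). There exists a constant C > 0 depending only on n such that for every y ∈ B(0,1), (1/Vol(B(0,1/2)))·∫_{B(0,1/2)} ( ∫_0^1 ‖y − x‖·u(ty + (1−t)x) dt ) dx ≤ C·∫_{B(y,2)} ‖z − y‖^{1−n}·u(z) dz, where all integrals are with respect to Lebesgue measure. -/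
open MeasureTheory ENNReal

lemma aux_comp_affine (n : ℕ) (φ : EuclideanSpace ℝ (Fin n) → ℝ≥0∞) (hφ : Measurable φ)
    (v : EuclideanSpace ℝ (Fin n)) {s : ℝ} (hs : 0 < s) :
    ∫⁻ x, φ (v + s • x) = ENNReal.ofReal ((s ^ n)⁻¹) * ∫⁻ z, φ z := by
  have h1 : ∫⁻ x, φ (v + s • x) = ∫⁻ z, φ (v + z) ∂(Measure.map (s • ·) volume) := by
    exact (lintegral_map (f := fun z => φ (v + z)) (hφ.comp (measurable_const_add v)) (measurable_const_smul s)).symm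
  rw [h1, Measure.map_addHaar_smul volume hs.ne', lintegral_smul_measure,
    lintegral_add_left_eq_self (fun z => φ z) v, finrank_euclideanSpace_fin,
    abs_of_nonneg (inv_nonneg.2 (pow_nonneg hs.le n)), smul_eq_mul]

lemma aux_t_integral (n : ℕ) (hn : 1 ≤ n) {a : ℝ} (ha : 0 < a) :
    ∫⁻ t in Set.Ico (0:ℝ) 1, (if a < 1 - t then ENNReal.ofReal (((1-t)^(n+1))⁻¹) else 0)
      ≤ ENNReal.ofReal ((a ^ n)⁻¹ / n) := by
  have hRHSnn : (0:ℝ) ≤ (a ^ n)⁻¹ / n := by positivity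
  rcases le_or_gt 1 a with hA | hA
  · -- integrand vanishes on Ico 0 1
    have : ∀ t ∈ Set.Ico (0:ℝ) 1,
        (if a < 1 - t then ENNReal.ofReal (((1-t)^(n+1))⁻¹) else 0) = 0 := by
      intro t ht
      rw [if_neg]
      push_neg
      linarith [ht.1]
    calc ∫⁻ t in Set.Ico (0:ℝ) 1, (if a < 1 - t then ENNReal.ofReal (((1-t)^(n+1))⁻¹) else 0)
        = ∫⁻ _ in Set.Ico (0:ℝ) 1, (0:ℝ≥0∞) := setLIntegral_congr_fun measurableSet_Ico
          this
      _ = 0 := lintegral_zero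
      _ ≤ _ := zero_le
  · set b := 1 - a with hb
    have hb0 : 0 < b := by simp [hb]; linarith
    have hb1 : b ≤ 1 := by simp [hb]; linarith
    set g : ℝ → ℝ := fun t => ((1-t)^(n+1))⁻¹ with hg
    -- step 1 : LHS ≤ ∫⁻ t in Ico 0 b, ofReal (g t)
    have step1 : ∫⁻ t in Set.Ico (0:ℝ) 1, (if a < 1 - t then ENNReal.ofReal (g t) else 0)
        ≤ ∫⁻ t in Set.Ico (0:ℝ) b, ENNReal.ofReal (g t) := by
      rw [← lintegral_indicator measurableSet_Ico, ← lintegral_indicator measurableSet_Ico]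
      refine lintegral_mono fun t => ?_
      by_cases ht : t ∈ Set.Ico (0:ℝ) 1
      · rw [Set.indicator_of_mem ht]
        by_cases hc : a < 1 - t
        · rw [if_pos hc, Set.indicator_of_mem (by constructor <;> [exact ht.1; linarith])]
        · rw [if_neg hc]; exact zero_le
      · rw [Set.indicator_of_notMem ht]; exact zero_le
    -- step 2 : relate to a real integral
    have hcont : ContinuousOn g (Set.Icc 0 b) := by
      apply ContinuousOn.inv₀
      · fun_prop
      · intro t ht
        have h' : a ≤ 1 - t := by have := ht.2; simp [hb] at this; linarith
        exact pow_ne_zero _ (by linarith)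
    have hint : IntegrableOn g (Set.Ico 0 b) volume :=
      (hcont.integrableOn_compact isCompact_Icc).mono_set Set.Ico_subset_Icc_self
    have step2 : ∫⁻ t in Set.Ico (0:ℝ) b, ENNReal.ofReal (g t)
        = ENNReal.ofReal (∫ t in Set.Ico (0:ℝ) b, g t) :=
      (ofReal_integral_eq_lintegral_ofReal hint
        ((ae_restrict_iff' measurableSet_Ico).2 (Filter.Eventually.of_forall
          (fun t ht => by
            have h' : a ≤ 1 - t := by have := ht.2; simp [hb] at this; linarith
            have h'' : 0 < 1 - t := lt_of_lt_of_le ha h'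
            positivity)))).symm
    -- step 3 : compute the real integral
    have step3 : ∫ t in Set.Ico (0:ℝ) b, g t ≤ (a ^ n)⁻¹ / n := by
      have e1 : ∫ t in Set.Ico (0:ℝ) b, g t = ∫ t in (0:ℝ)..b, g t := by
        rw [intervalIntegral.integral_of_le hb0.le, setIntegral_congr_set Ico_ae_eq_Ioc]
      have e2 : ∫ t in (0:ℝ)..b, g t = ∫ s in a..1, (fun s : ℝ => (s^(n+1))⁻¹) s := by
        have := intervalIntegral.integral_comp_sub_left (a := (0:ℝ)) (b := b)
          (fun s : ℝ => (s^(n+1))⁻¹) 1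
        simpa [hb] using this
      have e3 : ∫ s in a..1, (s^(n+1))⁻¹ = ((1:ℝ) ^ (-(n:ℤ)) - a ^ (-(n:ℤ))) / (-(n:ℤ)) := by
        have h0 : (0:ℝ) ∉ Set.uIcc a 1 := Set.notMem_uIcc_of_lt ha one_pos
        have := integral_zpow (a := a) (b := 1) (n := -(n+1 : ℤ))
          (Or.inr ⟨by omega, h0⟩)
        simp only [zpow_neg, zpow_natCast] at this ⊢
        rw [show ∫ s in a..1, ((s:ℝ)^(n+1))⁻¹ = ∫ s in a..1, ((s:ℝ)^((n:ℤ)+1 : ℤ))⁻¹ by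
          norm_cast]
        rw [this]
        norm_num
      rw [e1, e2, e3]
      have hne : (n:ℝ) ≠ 0 := by positivity
      have h1 : ((1:ℝ) ^ (-(n:ℤ)) - a ^ (-(n:ℤ))) / (-(n:ℤ)) = (a ^ (-(n:ℤ)) - 1) / n := by
        push_cast
        rw [one_zpow]
        field_simp
        ring
      rw [h1]
      have h2 : (a:ℝ) ^ (-(n:ℤ)) = (a ^ n)⁻¹ := by
        rw [zpow_neg, zpow_natCast]
      rw [h2]
      apply div_le_div_of_nonneg_right ?_ (by positivity)
      linarith
    calc ∫⁻ t in Set.Ico (0:ℝ) 1, (if a < 1 - t then ENNReal.ofReal (g t) else 0)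
        ≤ ∫⁻ t in Set.Ico (0:ℝ) b, ENNReal.ofReal (g t) := step1
      _ = ENNReal.ofReal (∫ t in Set.Ico (0:ℝ) b, g t) := step2
      _ ≤ ENNReal.ofReal ((a ^ n)⁻¹ / n) := ENNReal.ofReal_le_ofReal step3

lemma aux_slice (n : ℕ) (u : EuclideanSpace ℝ (Fin n) → ℝ≥0∞) (hu : Measurable u)
    (y : EuclideanSpace ℝ (Fin n)) (hy : ‖y‖ < 1) {t : ℝ} (ht : t ∈ Set.Ico (0:ℝ) 1) :
    ∫⁻ x in Metric.ball (0 : EuclideanSpace ℝ (Fin n)) (1/2),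
        ENNReal.ofReal ‖y - x‖ * u (t • y + (1 - t) • x)
      ≤ ∫⁻ z, (if ‖y - z‖ < 3/2 * (1 - t)
          then ENNReal.ofReal (((1-t)^(n+1))⁻¹ * ‖y - z‖) else 0) * u z := by
  set s : ℝ := 1 - t with hsdef
  have hs : 0 < s := by simp [hsdef]; exact ht.2
  set φ : EuclideanSpace ℝ (Fin n) → ℝ≥0∞ := fun z =>
    (Metric.ball (t • y) (s/2)).indicator (fun z => ENNReal.ofReal (s⁻¹ * ‖y - z‖) * u z) z
    with hφdef
  have hφm : Measurable φ := by
    apply Measurable.indicator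
    · exact ((measurable_const.sub measurable_id).norm.const_mul s⁻¹).ennreal_ofReal.mul hu
    · exact measurableSet_ball
  -- pointwise identification on the source
  have hpt : ∀ x, (Metric.ball (0 : EuclideanSpace ℝ (Fin n)) (1/2)).indicator
      (fun x => ENNReal.ofReal ‖y - x‖ * u (t • y + s • x)) x = φ (t • y + s • x) := by
    intro x
    have hmem : t • y + s • x ∈ Metric.ball (t • y) (s/2) ↔
        x ∈ Metric.ball (0 : EuclideanSpace ℝ (Fin n)) (1/2) := by
      simp only [Metric.mem_ball, dist_eq_norm, add_sub_cancel_left, sub_zero, norm_smul,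
        Real.norm_eq_abs, abs_of_pos hs]
      constructor
      · intro h; nlinarith
      · intro h; nlinarith
    have hnorm : ‖y - (t • y + s • x)‖ = s * ‖y - x‖ := by
      have : y - (t • y + s • x) = s • (y - x) := by
        rw [hsdef]; module
      rw [this, norm_smul, Real.norm_eq_abs, abs_of_pos hs]
    by_cases hx : x ∈ Metric.ball (0 : EuclideanSpace ℝ (Fin n)) (1/2)
    · rw [Set.indicator_of_mem hx]
      simp only [hφdef]
      rw [Set.indicator_of_mem (hmem.2 hx), hnorm]
      congr 1
      field_simp
    · rw [Set.indicator_of_notMem hx]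
      simp only [hφdef]
      rw [Set.indicator_of_notMem (fun h => hx (hmem.1 h))]
  calc ∫⁻ x in Metric.ball (0 : EuclideanSpace ℝ (Fin n)) (1/2),
        ENNReal.ofReal ‖y - x‖ * u (t • y + s • x)
      = ∫⁻ x, φ (t • y + s • x) := by
        rw [← lintegral_indicator measurableSet_ball]
        exact lintegral_congr hpt
    _ = ENNReal.ofReal ((s ^ n)⁻¹) * ∫⁻ z, φ z := aux_comp_affine n φ hφm _ hs
    _ = ∫⁻ z, ENNReal.ofReal ((s ^ n)⁻¹) * φ z := (lintegral_const_mul _ hφm).symm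
    _ ≤ _ := by
        refine lintegral_mono fun z => ?_
        by_cases hz : z ∈ Metric.ball (t • y) (s/2)
        · rw [hφdef]
          simp only [Set.indicator_of_mem hz]
          have hdz : ‖y - z‖ < 3/2 * s := by
            have h1 : ‖z - t • y‖ < s/2 := by
              have := Metric.mem_ball.1 hz; rwa [dist_eq_norm] at this
            have h2 : ‖y - t • y‖ = s * ‖y‖ := by
              have : y - t • y = s • y := by rw [hsdef]; module
              rw [this, norm_smul, Real.norm_eq_abs, abs_of_pos hs]
            calc ‖y - z‖ ≤ ‖y - t • y‖ + ‖t • y - z‖ := norm_sub_le_norm_sub_add_norm_sub _ _ _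
              _ = s * ‖y‖ + ‖z - t • y‖ := by rw [h2, norm_sub_rev]
              _ < s * 1 + s/2 := by
                  apply add_lt_add_of_le_of_lt _ h1
                  exact mul_le_mul_of_nonneg_left hy.le hs.le
              _ = 3/2 * s := by ring
          rw [if_pos hdz, ← mul_assoc, ← ENNReal.ofReal_mul (by positivity)]
          apply mul_le_mul_left
          apply ENNReal.ofReal_le_ofReal
          rw [← mul_assoc]
          apply mul_le_mul_of_nonneg_right _ (norm_nonneg _)
          rw [pow_succ, mul_inv]
        · rw [hφdef]
          simp only [Set.indicator_of_notMem hz, mul_zero, zero_le]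

lemma aux_pointwise (n : ℕ) (hn : 1 ≤ n) (y z : EuclideanSpace ℝ (Fin n)) (c : ℝ≥0∞) :
    ∫⁻ t in Set.Ico (0:ℝ) 1,
        (if ‖y - z‖ < 3/2 * (1-t) then ENNReal.ofReal (((1-t)^(n+1))⁻¹ * ‖y - z‖) else 0) * c
      ≤ ENNReal.ofReal ((3/2)^n / n) * (ENNReal.ofReal (‖z - y‖ ^ ((1:ℝ) - n)) * c) := by
  by_cases hzy : y = z
  · have : ∀ t : ℝ,
        (if ‖y - z‖ < 3/2 * (1-t) then ENNReal.ofReal (((1-t)^(n+1))⁻¹ * ‖y - z‖) else 0) * c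
          = 0 := by
      intro t
      subst hzy
      simp [sub_self, norm_zero, mul_zero]
    simp only [this, lintegral_const, zero_mul]
    exact zero_le
  · set r : ℝ := ‖y - z‖ with hrdef
    have hr : 0 < r := norm_pos_iff.2 (sub_ne_zero.2 hzy)
    have ha : 0 < 2/3 * r := by positivity
    set f : ℝ → ℝ≥0∞ := fun t => if 2/3 * r < 1 - t then ENNReal.ofReal (((1-t)^(n+1))⁻¹) else 0
      with hfdef
    have hfm : Measurable f := by
      apply Measurable.ite
      · exact measurableSet_lt measurable_const (measurable_const.sub measurable_id)
      · exact ((measurable_const.sub measurable_id).pow_const (n+1)).inv.ennreal_ofReal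
      · exact measurable_const
    have step1 : ∫⁻ t in Set.Ico (0:ℝ) 1,
        (if r < 3/2 * (1-t) then ENNReal.ofReal (((1-t)^(n+1))⁻¹ * r) else 0) * c
        = ∫⁻ t in Set.Ico (0:ℝ) 1, f t * (ENNReal.ofReal r * c) := by
      apply setLIntegral_congr_fun measurableSet_Ico
      intro t ht
      have h1t : (0:ℝ) ≤ 1 - t := by linarith [ht.2]
      have hcond : (r < 3/2 * (1-t)) ↔ (2/3 * r < 1 - t) := by
        constructor <;> intro h <;> linarith
      simp only [hfdef]
      by_cases hc : 2/3 * r < 1 - t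
      · rw [if_pos (hcond.2 hc), if_pos hc,
          ENNReal.ofReal_mul (by positivity), mul_assoc]
      · rw [if_neg (fun h => hc (hcond.1 h)), if_neg hc, zero_mul, zero_mul]
    have step2 : ∫⁻ t in Set.Ico (0:ℝ) 1, f t * (ENNReal.ofReal r * c)
        = (∫⁻ t in Set.Ico (0:ℝ) 1, f t) * (ENNReal.ofReal r * c) :=
      lintegral_mul_const _ hfm
    have step3 : (∫⁻ t in Set.Ico (0:ℝ) 1, f t) * (ENNReal.ofReal r * c)
        ≤ ENNReal.ofReal (((2/3 * r) ^ n)⁻¹ / n) * (ENNReal.ofReal r * c) :=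
      mul_le_mul_left (aux_t_integral n hn ha) _
    have step4 : ENNReal.ofReal (((2/3 * r) ^ n)⁻¹ / n) * (ENNReal.ofReal r * c)
        = ENNReal.ofReal ((3/2)^n / n) * (ENNReal.ofReal (‖z - y‖ ^ ((1:ℝ) - n)) * c) := by
      have hzr : ‖z - y‖ = r := by rw [hrdef, norm_sub_rev]
      have hrpow : r ^ ((1:ℝ) - n) = r * (r ^ n)⁻¹ := by
        rw [show (1:ℝ) - n = 1 + (-(n:ℝ)) by ring, Real.rpow_add hr, Real.rpow_one,
          Real.rpow_neg hr.le, Real.rpow_natCast]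
      have hreal : ((2/3 * r) ^ n)⁻¹ / n * r = (3/2)^n / n * (r * (r ^ n)⁻¹) := by
        rw [mul_pow, mul_inv]
        rw [show ((2/3 : ℝ)^n)⁻¹ = (3/2)^n by rw [← inv_pow]; norm_num]
        ring
      rw [← mul_assoc, ← ENNReal.ofReal_mul (by positivity), hreal, hzr, ← hrpow]
      rw [ENNReal.ofReal_mul (by positivity), mul_assoc]
    calc _ = ∫⁻ t in Set.Ico (0:ℝ) 1, f t * (ENNReal.ofReal r * c) := step1
      _ = (∫⁻ t in Set.Ico (0:ℝ) 1, f t) * (ENNReal.ofReal r * c) := step2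
      _ ≤ ENNReal.ofReal (((2/3 * r) ^ n)⁻¹ / n) * (ENNReal.ofReal r * c) := step3
      _ = _ := step4

/-- The averaged cone integral is controlled by a Riesz-type potential: there is a
constant `C > 0` depending only on `n` such that for every measurable
`u : ℝ^n → [0,∞]` vanishing outside the unit ball and every `y` in the unit ball,
`(1/Vol(B(0,1/2)))·∫_{B(0,1/2)} ∫_0^1 ‖y−x‖·u(ty+(1−t)x) dt dx
  ≤ C·∫_{B(y,2)} ‖z−y‖^{1−n}·u(z) dz`. -/
theorem average_cone_integral_le_riesz_potential (n : ℕ) (hn : 1 ≤ n) :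
    ∃ C : ℝ, 0 < C ∧ ∀ u : EuclideanSpace ℝ (Fin n) → ℝ≥0∞, Measurable u →
      (∀ x, x ∉ Metric.ball (0 : EuclideanSpace ℝ (Fin n)) 1 → u x = 0) →
      ∀ y ∈ Metric.ball (0 : EuclideanSpace ℝ (Fin n)) 1,
        (volume (Metric.ball (0 : EuclideanSpace ℝ (Fin n)) (1 / 2)))⁻¹ *
            ∫⁻ x in Metric.ball (0 : EuclideanSpace ℝ (Fin n)) (1 / 2),
              ∫⁻ t in Set.Icc (0 : ℝ) 1,
                ENNReal.ofReal ‖y - x‖ * u (t • y + (1 - t) • x) ≤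
          ENNReal.ofReal C *
            ∫⁻ z in Metric.ball y 2,
              ENNReal.ofReal (‖z - y‖ ^ ((1 : ℝ) - n)) * u z := by
  classical
  set E := EuclideanSpace ℝ (Fin n)
  set B : Set E := Metric.ball (0 : E) (1/2) with hBdef
  set vB : ℝ≥0∞ := volume B with hvBdef
  have hvB0 : vB ≠ 0 := by
    rw [hvBdef, hBdef]
    exact (Metric.measure_ball_pos volume (0:E) (by norm_num)).ne'
  have hvBtop : vB ≠ ⊤ := by
    rw [hvBdef, hBdef]
    exact measure_ball_lt_top.ne
  have hvBtoReal : 0 < vB.toReal := ENNReal.toReal_pos hvB0 hvBtop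
  set K : ℝ := (3/2)^n / n with hKdef
  have hK : 0 < K := by
    rw [hKdef]
    have hn' : (0:ℝ) < n := by exact_mod_cast hn
    positivity
  refine ⟨vB.toReal⁻¹ * K, by positivity, ?_⟩
  intro u hu hvanish y hy
  have hy1 : ‖y‖ < 1 := by rwa [mem_ball_zero_iff] at hy
  set G : ℝ → E → ℝ≥0∞ := fun t z =>
    (if ‖y - z‖ < 3/2 * (1-t) then ENNReal.ofReal (((1-t)^(n+1))⁻¹ * ‖y - z‖) else 0) * u z
    with hGdef
  have hGm : Measurable fun p : ℝ × E => G p.1 p.2 := by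
    apply Measurable.mul _ (hu.comp measurable_snd)
    apply Measurable.ite
    · apply measurableSet_lt
      · fun_prop
      · fun_prop
    · fun_prop
    · exact measurable_const
  have hFm : Measurable fun p : E × ℝ =>
      ENNReal.ofReal ‖y - p.1‖ * u (p.2 • y + (1 - p.2) • p.1) := by
    apply Measurable.mul
    · fun_prop
    · exact hu.comp (by fun_prop)
  -- chain of estimates for the inner double integral
  have step1 : ∫⁻ x in B, ∫⁻ t in Set.Icc (0:ℝ) 1,
        ENNReal.ofReal ‖y - x‖ * u (t • y + (1 - t) • x)
      = ∫⁻ t in Set.Icc (0:ℝ) 1, ∫⁻ x in B,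
        ENNReal.ofReal ‖y - x‖ * u (t • y + (1 - t) • x) :=
    lintegral_lintegral_swap hFm.aemeasurable
  have step2 : ∫⁻ t in Set.Icc (0:ℝ) 1, ∫⁻ x in B,
        ENNReal.ofReal ‖y - x‖ * u (t • y + (1 - t) • x)
      = ∫⁻ t in Set.Ico (0:ℝ) 1, ∫⁻ x in B,
        ENNReal.ofReal ‖y - x‖ * u (t • y + (1 - t) • x) :=
    (setLIntegral_congr Ico_ae_eq_Icc).symm
  have step3 : ∫⁻ t in Set.Ico (0:ℝ) 1, ∫⁻ x in B,
        ENNReal.ofReal ‖y - x‖ * u (t • y + (1 - t) • x)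
      ≤ ∫⁻ t in Set.Ico (0:ℝ) 1, ∫⁻ z, G t z := by
    apply lintegral_mono_ae
    rw [ae_restrict_iff' measurableSet_Ico]
    exact Filter.Eventually.of_forall fun t ht => aux_slice n u hu y hy1 ht
  have step4 : ∫⁻ t in Set.Ico (0:ℝ) 1, ∫⁻ z, G t z
      = ∫⁻ z, ∫⁻ t in Set.Ico (0:ℝ) 1, G t z :=
    lintegral_lintegral_swap hGm.aemeasurable
  have step5 : ∫⁻ z, ∫⁻ t in Set.Ico (0:ℝ) 1, G t z
      ≤ ∫⁻ z, ENNReal.ofReal K * (ENNReal.ofReal (‖z - y‖ ^ ((1:ℝ) - n)) * u z) :=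
    lintegral_mono fun z => aux_pointwise n hn y z (u z)
  have step6 : ∫⁻ z, ENNReal.ofReal K * (ENNReal.ofReal (‖z - y‖ ^ ((1:ℝ) - n)) * u z)
      = ENNReal.ofReal K * ∫⁻ z, ENNReal.ofReal (‖z - y‖ ^ ((1:ℝ) - n)) * u z := by
    apply lintegral_const_mul
    exact (by fun_prop : Measurable fun z : E => ENNReal.ofReal (‖z - y‖ ^ ((1:ℝ) - n))).mul hu
  have step7 : ∫⁻ z, ENNReal.ofReal (‖z - y‖ ^ ((1:ℝ) - n)) * u z
      = ∫⁻ z in Metric.ball y 2, ENNReal.ofReal (‖z - y‖ ^ ((1:ℝ) - n)) * u z := by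
    rw [← lintegral_indicator measurableSet_ball]
    apply lintegral_congr
    intro z
    by_cases hz : z ∈ Metric.ball y 2
    · rw [Set.indicator_of_mem hz]
    · rw [Set.indicator_of_notMem hz]
      have hz1 : z ∉ Metric.ball (0 : E) 1 := by
        intro h
        apply hz
        rw [mem_ball_zero_iff] at h
        rw [Metric.mem_ball, dist_eq_norm]
        calc ‖z - y‖ ≤ ‖z‖ + ‖y‖ := norm_sub_le _ _
          _ < 2 := by linarith
      rw [hvanish z hz1, mul_zero]
  have key : ∫⁻ x in B, ∫⁻ t in Set.Icc (0:ℝ) 1,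
        ENNReal.ofReal ‖y - x‖ * u (t • y + (1 - t) • x)
      ≤ ENNReal.ofReal K *
        ∫⁻ z in Metric.ball y 2, ENNReal.ofReal (‖z - y‖ ^ ((1:ℝ) - n)) * u z := by
    rw [step1, step2, ← step7, ← step6]
    exact le_trans step3 (le_of_eq step4 |>.trans step5)
  have hC : ENNReal.ofReal (vB.toReal⁻¹ * K) = vB⁻¹ * ENNReal.ofReal K := by
    rw [ENNReal.ofReal_mul (by positivity), ENNReal.ofReal_inv_of_pos hvBtoReal,
      ENNReal.ofReal_toReal hvBtop]
  rw [hC, mul_assoc]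
  exact mul_le_mul_right key _
end

section
/- Let m ≥ 0 and N ≥ 1 be integers, let S and T be countable sets, and for each i ∈ {0,…,m+1} let ∂_i : T → S be a map such that for every σ ∈ S the number of pairs (i,τ) with i ∈ {0,…,m+1}, τ ∈ T and ∂_i(τ) = σ is at most N. Let φ be a Young function, θ : S → ℝ a function, and α > 0. Then Σ_{τ∈T} φ( (1/α)·|Σ_{i=0}^{m+1} (−1)^i θ(∂_i τ)| ) ≤ (N/(m+2))·Σ_{σ∈S} φ( (m+2)·|θ(σ)|/α ), where the sums are taken in [0,∞]. -/
open ENNReal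

lemma young_mono_s8 {φ : ℝ → ℝ} (hφ : IsYoungFunction φ) {a b : ℝ} (ha : 0 ≤ a) (hab : a ≤ b) :
    φ a ≤ φ b := by
  obtain ⟨hconv, heven, hnn, hzero⟩ := hφ
  rcases eq_or_lt_of_le (ha.trans hab) with hb | hb
  · have h : a = 0 := le_antisymm (hab.trans hb.symm.le) ha
    rw [h, ← hb]
  · have h2b : (0:ℝ) < 2 * b := by linarith
    have hw1 : (0:ℝ) ≤ (b + a) / (2 * b) := by positivity
    have hw2 : (0:ℝ) ≤ (b - a) / (2 * b) := by
      apply div_nonneg; linarith; linarith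
    have hsum : (b + a) / (2 * b) + (b - a) / (2 * b) = 1 := by
      field_simp; ring
    have hcomb : ((b + a) / (2 * b)) • b + ((b - a) / (2 * b)) • (-b) = a := by
      simp only [smul_eq_mul]; field_simp; ring
    have h := hconv.2 (Set.mem_univ b) (Set.mem_univ (-b)) hw1 hw2 hsum
    rw [hcomb, heven b, smul_eq_mul, smul_eq_mul, ← add_mul, hsum, one_mul] at h
    exact h

/-- Modular estimate for the simplicial coboundary operator on Orlicz sequence
spaces: if each `σ ∈ S` arises as a face `∂_i τ` for at most `N` pairs `(i,τ)`, then
`Σ_τ φ((1/α)|Σ_i (−1)^i θ(∂_i τ)|) ≤ (N/(m+2))·Σ_σ φ((m+2)|θ(σ)|/α)`. -/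
theorem coboundary_modular_estimate (m N : ℕ) (hN : 1 ≤ N)
    (S T : Type*) [Countable S] [Countable T]
    (bdry : Fin (m + 2) → T → S)
    (hfin : ∀ σ : S, {p : Fin (m + 2) × T | bdry p.1 p.2 = σ}.Finite)
    (hcard : ∀ σ : S, {p : Fin (m + 2) × T | bdry p.1 p.2 = σ}.ncard ≤ N)
    (φ : ℝ → ℝ) (hφ : IsYoungFunction φ) (θ : S → ℝ) (α : ℝ) (hα : 0 < α) :
    ∑' τ : T, ENNReal.ofReal
        (φ ((1 / α) * |∑ i : Fin (m + 2), (-1 : ℝ) ^ (i : ℕ) * θ (bdry i τ)|)) ≤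
      ((N : ℝ≥0∞) / ((m : ℝ≥0∞) + 2)) *
        ∑' σ : S, ENNReal.ofReal (φ (((m : ℝ) + 2) * |θ σ| / α)) := by
  obtain ⟨hconv, heven, hnn, hzero⟩ := hφ
  set f : S → ℝ≥0∞ := fun σ => ENNReal.ofReal (φ (((m : ℝ) + 2) * |θ σ| / α)) with hfdef
  have hm2 : (0:ℝ) < (m:ℝ) + 2 := by positivity
  have hc : ENNReal.ofReal (1/((m:ℝ)+2)) = 1/((m:ℝ≥0∞)+2) := by
    rw [ENNReal.ofReal_div_of_pos hm2, ENNReal.ofReal_one]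
    congr 1
    rw [ENNReal.ofReal_add (by positivity) (by norm_num), ENNReal.ofReal_natCast]
    norm_num
  have key : ∀ τ : T,
      ENNReal.ofReal (φ ((1 / α) * |∑ i : Fin (m + 2), (-1 : ℝ) ^ (i : ℕ) * θ (bdry i τ)|))
        ≤ (1 / ((m:ℝ≥0∞) + 2)) * ∑ i : Fin (m + 2), f (bdry i τ) := by
    intro τ
    have habs : |∑ i : Fin (m+2), (-1:ℝ)^(i:ℕ) * θ (bdry i τ)|
        ≤ ∑ i : Fin (m+2), |θ (bdry i τ)| := by
      refine (Finset.abs_sum_le_sum_abs _ _).trans ?_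
      refine Finset.sum_le_sum fun i _ => ?_
      rw [abs_mul, abs_pow, abs_neg, abs_one, one_pow, one_mul]
    have h1 : φ ((1/α) * |∑ i : Fin (m+2), (-1:ℝ)^(i:ℕ) * θ (bdry i τ)|)
        ≤ φ ((1/α) * ∑ i : Fin (m+2), |θ (bdry i τ)|) :=
      young_mono_s8 ⟨hconv, heven, hnn, hzero⟩ (by positivity)
        (mul_le_mul_of_nonneg_left habs (by positivity))
    have hjen := hconv.map_sum_le (t := Finset.univ)
      (w := fun _ : Fin (m+2) => 1/((m:ℝ)+2))
      (p := fun i => ((m:ℝ)+2) * |θ (bdry i τ)| / α) (fun i _ => by positivity)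
      (by rw [Finset.sum_const, Finset.card_univ, Fintype.card_fin, nsmul_eq_mul]
          push_cast
          field_simp)
      (fun i _ => Set.mem_univ _)
    have harg : ∑ i : Fin (m+2), (1/((m:ℝ)+2)) • (((m:ℝ)+2) * |θ (bdry i τ)| / α)
        = (1/α) * ∑ i : Fin (m+2), |θ (bdry i τ)| := by
      rw [Finset.mul_sum]
      refine Finset.sum_congr rfl fun i _ => ?_
      rw [smul_eq_mul]; field_simp
    rw [harg] at hjen
    calc ENNReal.ofReal (φ ((1/α) * |∑ i : Fin (m+2), (-1:ℝ)^(i:ℕ) * θ (bdry i τ)|))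
        ≤ ENNReal.ofReal (∑ i : Fin (m+2),
            (1/((m:ℝ)+2)) * φ (((m:ℝ)+2) * |θ (bdry i τ)| / α)) :=
          ENNReal.ofReal_le_ofReal (h1.trans hjen)
      _ = ∑ i : Fin (m+2), ENNReal.ofReal
            ((1/((m:ℝ)+2)) * φ (((m:ℝ)+2) * |θ (bdry i τ)| / α)) :=
          ENNReal.ofReal_sum_of_nonneg (fun i _ => mul_nonneg (by positivity) (hnn _))
      _ = ∑ i : Fin (m+2), (1/((m:ℝ≥0∞)+2)) * f (bdry i τ) := by
          refine Finset.sum_congr rfl fun i _ => ?_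
          rw [ENNReal.ofReal_mul (by positivity), hc]
      _ = (1/((m:ℝ≥0∞)+2)) * ∑ i : Fin (m+2), f (bdry i τ) := by
          rw [Finset.mul_sum]
  calc ∑' τ : T, ENNReal.ofReal
        (φ ((1 / α) * |∑ i : Fin (m + 2), (-1 : ℝ) ^ (i : ℕ) * θ (bdry i τ)|))
      ≤ ∑' τ : T, (1/((m:ℝ≥0∞)+2)) * ∑ i : Fin (m+2), f (bdry i τ) :=
        ENNReal.tsum_le_tsum key
    _ = (1/((m:ℝ≥0∞)+2)) * ∑' τ : T, ∑ i : Fin (m+2), f (bdry i τ) :=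
        ENNReal.tsum_mul_left
    _ = (1/((m:ℝ≥0∞)+2)) * ∑' p : Fin (m+2) × T, f (bdry p.1 p.2) := by
        congr 1
        rw [show (∑' p : Fin (m+2) × T, f (bdry p.1 p.2))
            = ∑' (i : Fin (m+2)) (τ : T), f (bdry i τ) from ENNReal.tsum_prod (f := fun i τ => f (bdry i τ)),
          ENNReal.tsum_comm]
        exact tsum_congr fun τ => (tsum_fintype _).symm
    _ = (1/((m:ℝ≥0∞)+2)) * ∑' σ : S,
          ∑' p : (fun p : Fin (m+2) × T => bdry p.1 p.2) ⁻¹' {σ}, f (bdry p.1.1 p.1.2) := by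
        rw [ENNReal.tsum_fiberwise (fun p : Fin (m+2) × T => f (bdry p.1 p.2))
          (fun p : Fin (m+2) × T => bdry p.1 p.2)]
    _ ≤ (1/((m:ℝ≥0∞)+2)) * ∑' σ : S, (N:ℝ≥0∞) * f σ := by
        refine mul_le_mul_right (ENNReal.tsum_le_tsum fun σ => ?_) _
        have hset : (fun p : Fin (m+2) × T => bdry p.1 p.2) ⁻¹' {σ}
            = {p : Fin (m + 2) × T | bdry p.1 p.2 = σ} := by
          ext p; simp
        calc ∑' p : (fun p : Fin (m+2) × T => bdry p.1 p.2) ⁻¹' {σ}, f (bdry p.1.1 p.1.2)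
            = ∑' _ : (fun p : Fin (m+2) × T => bdry p.1 p.2) ⁻¹' {σ}, f σ :=
              tsum_congr fun p => by
                have hp : bdry p.1.1 p.1.2 = σ := p.2
                rw [hp]
          _ = ((fun p : Fin (m+2) × T => bdry p.1 p.2) ⁻¹' {σ}).encard * f σ :=
              ENNReal.tsum_set_const _ _
          _ ≤ (N:ℝ≥0∞) * f σ := by
              refine mul_le_mul_left ?_ _
              rw [hset, ← (hfin σ).cast_ncard_eq]
              exact_mod_cast hcard σ
    _ = ((N : ℝ≥0∞) / ((m : ℝ≥0∞) + 2)) * ∑' σ : S, f σ := by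
        rw [ENNReal.tsum_mul_left, ← mul_assoc]
        congr 1
        rw [one_div, mul_comm, div_eq_mul_inv]
end
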